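/- arXiv:2511.15460 — 7 statements merged into one kernel-verified Lean document; each statement's English description precedes it below -/
import Mathlib

section
/- Let M be a matroid on a finite ground set E with an injective weight function w : E → ℝ, let e ∈ E, and let B be a minimum-weight base of the restriction M|(E\{e}). Suppose e lies in the closure of B in M, let C be the unique circuit of M contained in B ∪ {e}, and let f be the element of C of maximum weight. Then: if f ≠ e (equivalently w(f) > w(e)), the set (B \ {f}) ∪ {e} is a minimum-weight base of M; and if f = e, the set B is a minimum-weight base of M. -/
open Set Matroid

variable {α : Type*}

/-- The rank of a set `A` in a matroid `M`: the size of a largest independent subset of `A`. -/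
noncomputable def mrk (M : Matroid α) (A : Set α) : ℕ :=
  sSup {n : ℕ | ∃ I, M.Indep I ∧ I ⊆ A ∧ I.ncard = n}

/-- The total weight of a set of elements. -/
noncomputable def wSum (w : α → ℝ) (S : Set α) : ℝ := ∑ᶠ e ∈ S, w e

/-- `B` is a minimum-weight base of `M` with respect to the weights `w`. -/
def IsMinWeightBase (M : Matroid α) (w : α → ℝ) (B : Set α) : Prop :=
  M.IsBase B ∧ ∀ B', M.IsBase B' → wSum w B ≤ wSum w B'

/-- A circuit: an inclusion-wise minimal dependent set. -/
def IsCircuit (M : Matroid α) (C : Set α) : Prop :=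
  C ⊆ M.E ∧ ¬ M.Indep C ∧ ∀ x ∈ C, M.Indep (C \ {x})

/-- The fractional base packing number `Φ_M`. -/
noncomputable def PhiM (M : Matroid α) : ℝ :=
  sInf {x : ℝ | ∃ A ⊆ M.E, mrk M (M.E \ A) < mrk M M.E ∧
    x = (A.ncard : ℝ) / ((mrk M M.E : ℝ) - (mrk M (M.E \ A) : ℝ))}

/-- `A` attains the fractional packing number of `M`. -/
def AttainsPhi (M : Matroid α) (A : Set α) : Prop :=
  A ⊆ M.E ∧ mrk M (M.E \ A) < mrk M M.E ∧
    (A.ncard : ℝ) / ((mrk M M.E : ℝ) - (mrk M (M.E \ A) : ℝ)) = PhiM M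

/-- The fractional base covering number `β_M`. -/
noncomputable def BetaM (M : Matroid α) : ℝ :=
  sSup {x : ℝ | ∃ A ⊆ M.E, A.Nonempty ∧ x = (A.ncard : ℝ) / (mrk M A : ℝ)}

/-- The relative load of an element `e` in a base collection `Bs` of size `k`. -/
noncomputable def relLoad {k : ℕ} (Bs : Fin k → Set α) (e : α) : ℝ :=
  (({i | e ∈ Bs i} : Set (Fin k)).ncard : ℝ) / (k : ℝ)
lemma wSum_insert' (w : α → ℝ) {S : Set α} {a : α} (hS : S.Finite) (ha : a ∉ S) :
    wSum w (insert a S) = w a + wSum w S :=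
  finsum_mem_insert w ha hS

lemma wSum_diff' (w : α → ℝ) {S : Set α} {a : α} (hS : S.Finite) (ha : a ∈ S) :
    wSum w S = w a + wSum w (S \ {a}) := by
  have h : insert a (S \ {a}) = S := by
    rw [insert_diff_singleton, insert_eq_of_mem ha]
  conv_lhs => rw [← h]
  exact wSum_insert' w hS.diff (fun h' => h'.2 rfl)

/-- Insertion step for a dynamic minimum-weight base: if `e` is spanned by the old
minimum-weight base `B` of `M` restricted to `E \ {e}`, and `f` is the maximum-weight
element of the unique circuit of `M` inside `B ∪ {e}`, then swapping `f` for `e`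
(if `f ≠ e`) yields a minimum-weight base of `M`, and otherwise `B` itself is one. -/
theorem stmt_0 (M : Matroid α) (hfin : M.E.Finite) (w : α → ℝ) (hw : Set.InjOn w M.E)
    (e : α) (he : e ∈ M.E)
    (B : Set α) (hB : IsMinWeightBase (M ↾ (M.E \ {e})) w B)
    (hecl : e ∈ M.closure B)
    (C : Set α) (hC : _root_.IsCircuit M C) (hCsub : C ⊆ insert e B)
    (f : α) (hfC : f ∈ C) (hfmax : ∀ g ∈ C, w g ≤ w f) :
    (f ≠ e → IsMinWeightBase M w (insert e (B \ {f}))) ∧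
    (f = e → IsMinWeightBase M w B) := by
  obtain ⟨hBbase, hBmin⟩ := hB
  have hEe : M.E \ {e} ⊆ M.E := diff_subset
  have hBasis : M.IsBasis B (M.E \ {e}) := (isBase_restrict_iff hEe).1 hBbase
  have hBindep : M.Indep B := hBasis.indep
  have hBsub : B ⊆ M.E \ {e} := hBasis.subset
  have heB : e ∉ B := fun h => (hBsub h).2 rfl
  have hBfin : B.Finite := hfin.subset hBindep.subset_ground
  -- B is a base of M
  have hMEcl : M.E ⊆ M.closure B := by
    intro x hx
    by_cases hxe : x = e
    · exact hxe ▸ hecl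
    · exact hBasis.subset_closure ⟨hx, hxe⟩
  have hBbaseM : M.IsBase B := hBindep.isBase_of_ground_subset_closure hMEcl
  -- e ∈ C
  have heC : e ∈ C := by
    by_contra h
    exact hC.2.1 (hBindep.subset fun x hx => ((hCsub hx).resolve_left (fun h' => h (h' ▸ hx))))
  -- e ∈ closure (C \ {e})
  have heclC : e ∈ M.closure (C \ {e}) := by
    have hCe : M.Indep (C \ {e}) := hC.2.2 e heC
    have hins : insert e (C \ {e}) = C := by
      rw [insert_diff_singleton, insert_eq_of_mem heC]
    by_contra hcon
    refine hC.2.1 ?_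
    rw [← hins, hCe.insert_indep_iff_of_notMem (fun h => h.2 rfl)]
    exact ⟨he, hcon⟩
  -- key inequality against any base of M
  have key : ∀ B', M.IsBase B' → ∃ g ∈ C, wSum w B + w e ≤ wSum w B' + w g := by
    intro B' hB'
    have hB'fin : B'.Finite := hfin.subset hB'.subset_ground
    by_cases heB' : e ∈ B'
    · -- find g ∈ C \ {e} not spanned by B' \ {e}
      have hne : ¬ (C \ {e} ⊆ M.closure (B' \ {e})) := by
        intro hsub
        exact hB'.indep.notMem_closure_diff_of_mem heB'
          (closure_subset_closure_of_subset_closure hsub heclC)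
      obtain ⟨g, hgCe, hgcl⟩ := not_subset.1 hne
      have hgE : g ∈ M.E := hC.1 hgCe.1
      have hgB'e : g ∉ B' \ {e} := fun h =>
        hgcl (M.subset_closure (B' \ {e}) ((diff_subset).trans hB'.subset_ground) h)
      have hgB' : g ∉ B' := fun h => hgB'e ⟨h, hgCe.2⟩
      have hindep : M.Indep (insert g (B' \ {e})) := by
        rw [(hB'.indep.subset diff_subset).insert_indep_iff_of_notMem hgB'e]
        exact ⟨hgE, hgcl⟩
      have hbase2 : M.IsBase (insert g (B' \ {e})) := hB'.exchange_isBase_of_indep hgB' hindep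
      have hsub2 : insert g (B' \ {e}) ⊆ M.E \ {e} := by
        rintro x (rfl | hx)
        · exact ⟨hgE, hgCe.2⟩
        · exact ⟨hB'.subset_ground hx.1, hx.2⟩
      have hres : (M ↾ (M.E \ {e})).IsBase (insert g (B' \ {e})) := by
        rw [isBase_restrict_iff hEe]
        exact hbase2.indep.isBasis_of_subset_of_subset_closure hsub2
          (fun x hx => by rw [hbase2.closure_eq]; exact hx.1)
      have hle := hBmin _ hres
      have h1 : wSum w (insert g (B' \ {e})) = w g + wSum w (B' \ {e}) :=
        wSum_insert' w hB'fin.diff hgB'e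
      have h2 : wSum w B' = w e + wSum w (B' \ {e}) := wSum_diff' w hB'fin heB'
      exact ⟨g, hgCe.1, by linarith⟩
    · -- B' is a base of the restriction
      have hres : (M ↾ (M.E \ {e})).IsBase B' := by
        rw [isBase_restrict_iff hEe]
        refine hB'.indep.isBasis_of_subset_of_subset_closure
          (fun x hx => ⟨hB'.subset_ground hx, fun h => heB' (h ▸ hx)⟩)
          (fun x hx => by rw [hB'.closure_eq]; exact hx.1)
      exact ⟨e, heC, by linarith [hBmin _ hres]⟩
  constructor
  · intro hfe
    have hfB : f ∈ B := (hCsub hfC).resolve_left hfe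
    have hfE : f ∈ M.E := hC.1 hfC
    -- f ∈ closure (C \ {f})
    have hfclC : f ∈ M.closure (C \ {f}) := by
      have hCf : M.Indep (C \ {f}) := hC.2.2 f hfC
      have hins : insert f (C \ {f}) = C := by
        rw [insert_diff_singleton, insert_eq_of_mem hfC]
      by_contra hcon
      refine hC.2.1 ?_
      rw [← hins, hCf.insert_indep_iff_of_notMem (fun h => h.2 rfl)]
      exact ⟨hfE, hcon⟩
    have heBf : e ∉ B \ {f} := fun h => heB h.1
    -- e ∉ closure (B \ {f})
    have hnotcl : e ∉ M.closure (B \ {f}) := by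
      intro hcl
      have hCfsub : C \ {f} ⊆ insert e (B \ {f}) := by
        rintro x ⟨hxC, hxf⟩
        rcases hCsub hxC with rfl | hxB
        · exact mem_insert _ _
        · exact mem_insert_of_mem _ ⟨hxB, hxf⟩
      have : f ∈ M.closure (insert e (B \ {f})) :=
        M.closure_subset_closure hCfsub hfclC
      rw [closure_insert_eq_of_mem_closure hcl] at this
      exact hBindep.notMem_closure_diff_of_mem hfB this
    have hindep : M.Indep (insert e (B \ {f})) := by
      rw [(hBindep.subset diff_subset).insert_indep_iff_of_notMem heBf]
      exact ⟨he, hnotcl⟩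
    have hbase : M.IsBase (insert e (B \ {f})) := hBbaseM.exchange_isBase_of_indep heB hindep
    refine ⟨hbase, fun B' hB' => ?_⟩
    obtain ⟨g, hgC, hkey⟩ := key B' hB'
    have h1 : wSum w (insert e (B \ {f})) = w e + wSum w (B \ {f}) :=
      wSum_insert' w hBfin.diff heBf
    have h2 : wSum w B = w f + wSum w (B \ {f}) := wSum_diff' w hBfin hfB
    have h3 := hfmax g hgC
    linarith
  · intro hfe
    refine ⟨hBbaseM, fun B' hB' => ?_⟩
    obtain ⟨g, hgC, hkey⟩ := key B' hB'
    have h3 := hfmax g hgC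
    rw [hfe] at h3
    linarith
end

section
/- Let M be a matroid on a finite ground set E with rk(E) ≥ 1. Then the maximum over all base collections B of M of the quantity 1 / (max_{e∈E} ℓ^B(e)) exists and equals Φ_M; that is, there is a base collection B with 1 / (max_{e∈E} ℓ^B(e)) = Φ_M, and every base collection B satisfies 1 / (max_{e∈E} ℓ^B(e)) ≤ Φ_M. -/
open Set Matroid

variable {α : Type*}

namespace Aux

variable {M : Matroid α} {I J X Y : Set α}

lemma indep_ncard_le_of_subset_closure (hE : M.E.Finite) (hJ : M.Indep J) (hI : M.Indep I)
    (h : J ⊆ M.closure I) : J.ncard ≤ I.ncard := by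
  by_contra hlt
  push_neg at hlt
  have hIfin : I.Finite := hE.subset hI.subset_ground
  have hJfin : J.Finite := hE.subset hJ.subset_ground
  have henc : I.encard < J.encard := by
    rw [hIfin.encard_eq_coe_toFinset_card, hJfin.encard_eq_coe_toFinset_card]
    exact_mod_cast by
      rwa [Set.ncard_eq_toFinset_card _ hIfin, Set.ncard_eq_toFinset_card _ hJfin] at hlt
  obtain ⟨e, heJI, hins⟩ := hI.augment hJ henc
  have : M.Dep (insert e I) := hI.insert_dep_iff.2 ⟨h heJI.1, heJI.2⟩
  exact this.not_indep hins

lemma mrk_bddAbove (hE : M.E.Finite) :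
    BddAbove {n : ℕ | ∃ I, M.Indep I ∧ I ⊆ X ∧ I.ncard = n} := by
  refine ⟨M.E.ncard, fun n hn => ?_⟩
  obtain ⟨I, hI, -, rfl⟩ := hn
  exact Set.ncard_le_ncard hI.subset_ground hE

lemma le_mrk (hE : M.E.Finite) (hJ : M.Indep J) (hJX : J ⊆ X) : J.ncard ≤ mrk M X :=
  le_csSup (mrk_bddAbove hE) ⟨J, hJ, hJX, rfl⟩

lemma mrk_eq_of_basis (hE : M.E.Finite) (hI : M.IsBasis I X) : mrk M X = I.ncard := by
  refine le_antisymm (csSup_le ⟨I.ncard, I, hI.indep, hI.subset, rfl⟩ ?_)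
    (le_mrk hE hI.indep hI.subset)
  rintro n ⟨J, hJ, hJX, rfl⟩
  exact indep_ncard_le_of_subset_closure hE hJ hI.indep (hJX.trans hI.subset_closure)

lemma mrk_indep (hE : M.E.Finite) (hI : M.Indep I) : mrk M I = I.ncard :=
  mrk_eq_of_basis hE hI.isBasis_self

lemma mrk_le_of_subset_closure (hE : M.E.Finite) (hX : X ⊆ M.E) (hI : M.Indep I)
    (h : X ⊆ M.closure I) : mrk M X ≤ I.ncard := by
  obtain ⟨K, hK⟩ := M.exists_isBasis X hX
  rw [mrk_eq_of_basis hE hK]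
  exact indep_ncard_le_of_subset_closure hE hK.indep hI (hK.subset.trans h)

lemma mrk_mono (hE : M.E.Finite) (hXY : X ⊆ Y) (hY : Y ⊆ M.E) : mrk M X ≤ mrk M Y := by
  obtain ⟨K, hK⟩ := M.exists_isBasis X (hXY.trans hY)
  rw [mrk_eq_of_basis hE hK]
  exact le_mrk hE hK.indep (hK.subset.trans hXY)

lemma mrk_le_ncard (hE : M.E.Finite) (hX : X ⊆ M.E) : mrk M X ≤ X.ncard := by
  obtain ⟨K, hK⟩ := M.exists_isBasis X hX
  rw [mrk_eq_of_basis hE hK]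
  exact Set.ncard_le_ncard hK.subset (hE.subset hX)

lemma indep_of_subset_closure (hE : M.E.Finite) (hI : M.Indep I) (hJE : J ⊆ M.E)
    (hIJ : I ⊆ M.closure J) (hcard : J.ncard ≤ I.ncard) : M.Indep J := by
  obtain ⟨K, hK⟩ := M.exists_isBasis J hJE
  have hKcl : M.closure K = M.closure J := hK.closure_eq_closure
  have h1 : I.ncard ≤ K.ncard :=
    indep_ncard_le_of_subset_closure hE hI hK.indep (by rwa [hKcl])
  have : K = J := Set.eq_of_subset_of_ncard_le hK.subset (le_trans hcard h1) (hE.subset hJE)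
  rw [← this]; exact hK.indep

lemma base_ncard (hE : M.E.Finite) {B : Set α} (hB : M.IsBase B) : B.ncard = mrk M M.E :=
  (mrk_eq_of_basis hE hB.isBasis_ground).symm

lemma base_of_indep_ncard (hE : M.E.Finite) (hI : M.Indep I) (h : mrk M M.E ≤ I.ncard) :
    M.IsBase I := by
  obtain ⟨B, hB, hIB⟩ := hI.exists_isBase_superset
  have : I = B := Set.eq_of_subset_of_ncard_le hIB
    (le_trans (le_of_eq (base_ncard hE hB)) h) (hE.subset hB.subset_ground)
  rwa [this]

lemma mrk_eq_of_spanned (hE : M.E.Finite) (hX : X ⊆ M.E) (hI : M.Indep I) (hIX : I ⊆ X)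
    (h : X ⊆ M.closure I) : mrk M X = I.ncard :=
  le_antisymm (mrk_le_of_subset_closure hE hX hI h) (le_mrk hE hI hIX)

end Aux



namespace Aux
variable {M : Matroid α} {I J X Y C D : Set α} {u v : α}

lemma exists_circuit_aux (n : ℕ) : ∀ D : Set α, D.ncard ≤ n → D ⊆ M.E → D.Finite → ¬ M.Indep D →
    ∃ C, C ⊆ D ∧ ¬M.Indep C ∧ ∀ x ∈ C, M.Indep (C \ {x}) := by
  induction n with
  | zero =>
    intro D hcard hDE hfin hdep
    rw [Nat.le_zero, Set.ncard_eq_zero hfin] at hcard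
    exact absurd (hcard ▸ M.empty_indep) hdep
  | succ n ih =>
    intro D hcard hDE hfin hdep
    by_cases hmin : ∀ x ∈ D, M.Indep (D \ {x})
    · exact ⟨D, Subset.rfl, hdep, hmin⟩
    · push_neg at hmin
      obtain ⟨x, hxD, hxdep⟩ := hmin
      obtain ⟨C, hCsub, h1, h2⟩ := ih (D \ {x})
        (by
          have := Set.ncard_diff_singleton_lt_of_mem hxD hfin
          omega)
        (diff_subset.trans hDE) hfin.diff hxdep
      exact ⟨C, hCsub.trans diff_subset, h1, h2⟩

lemma exists_circuit (hDE : D ⊆ M.E) (hfin : D.Finite) (hdep : ¬ M.Indep D) :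
    ∃ C, C ⊆ D ∧ ¬M.Indep C ∧ ∀ x ∈ C, M.Indep (C \ {x}) :=
  exists_circuit_aux D.ncard D le_rfl hDE hfin hdep

lemma circuit_mem_closure (hCE : C ⊆ M.E) (hdep : ¬ M.Indep C)
    (hmin : ∀ x ∈ C, M.Indep (C \ {x})) (huC : u ∈ C) : u ∈ M.closure (C \ {u}) := by
  have hind := hmin u huC
  have hdep2 : M.Dep (insert u (C \ {u})) := by
    rw [Set.insert_diff_singleton, Set.insert_eq_of_mem huC]
    exact ⟨hdep, hCE⟩
  exact (hind.insert_dep_iff.1 hdep2).1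

end Aux

namespace Aux
variable {M : Matroid α} {I J X Y C D : Set α} {u v : α}

lemma circuit_mem_insert (hI : M.Indep I) (hC : C ⊆ insert u I) (hdep : ¬ M.Indep C) : u ∈ C := by
  by_contra h
  refine hdep (hI.subset fun x hx => ?_)
  rcases hC hx with rfl | hxI
  · exact absurd hx h
  · exact hxI

lemma indep_ncard_le_of_subset_closure' : True := trivial

lemma swap_lemma (hE : M.E.Finite) (hI : M.Indep I) (huE : u ∈ M.E) (huI : u ∉ I)
    (hC : C ⊆ insert u I) (hdep : ¬ M.Indep C) (hmin : ∀ x ∈ C, M.Indep (C \ {x}))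
    (hvC : v ∈ C) (hvu : v ≠ u) :
    M.Indep (insert u (I \ {v})) ∧ M.closure (insert u (I \ {v})) = M.closure I ∧ v ∈ I := by
  have hCE : C ⊆ M.E := hC.trans (insert_subset huE hI.subset_ground)
  have huC : u ∈ C := circuit_mem_insert hI hC hdep
  have hvI : v ∈ I := by
    rcases hC hvC with rfl | h
    · exact absurd rfl hvu
    · exact h
  set J := insert u (I \ {v}) with hJ
  have hJE : J ⊆ M.E := insert_subset huE (diff_subset.trans hI.subset_ground)
  have hCvJ : C \ {v} ⊆ J := by
    rintro x ⟨hxC, hxv⟩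
    rcases hC hxC with rfl | hxI
    · exact mem_insert _ _
    · exact mem_insert_of_mem _ ⟨hxI, hxv⟩
  have hvclJ : v ∈ M.closure J :=
    M.closure_subset_closure hCvJ (circuit_mem_closure hCE hdep hmin hvC)
  have hIclJ : I ⊆ M.closure J := by
    intro x hxI
    rcases eq_or_ne x v with rfl | hxv
    · exact hvclJ
    · exact M.subset_closure J hJE (mem_insert_of_mem _ ⟨hxI, hxv⟩)
  have huclI : u ∈ M.closure I := by
    have h1 : u ∈ M.closure (C \ {u}) := circuit_mem_closure hCE hdep hmin huC
    refine M.closure_subset_closure ?_ h1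
    rintro x ⟨hxC, hxu⟩
    rcases hC hxC with rfl | h
    · exact absurd rfl hxu
    · exact h
  have hclJI : M.closure J ⊆ M.closure I := by
    refine M.closure_subset_closure_of_subset_closure (insert_subset huclI ?_)
    exact diff_subset.trans (M.subset_closure I hI.subset_ground)
  have hclIJ : M.closure I ⊆ M.closure J := M.closure_subset_closure_of_subset_closure hIclJ
  have hcardJ : J.ncard ≤ I.ncard := by
    have h1 : J.ncard ≤ (I \ {v}).ncard + 1 := Set.ncard_insert_le _ _
    have h2 : (I \ {v}).ncard = I.ncard - 1 :=
      Set.ncard_diff_singleton_of_mem hvI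
    have h3 : 1 ≤ I.ncard := (Set.ncard_pos (hE.subset hI.subset_ground)).2 ⟨v, hvI⟩
    omega
  exact ⟨indep_of_subset_closure hE hI hJE hIclJ hcardJ,
    le_antisymm hclJI hclIJ, hvI⟩

end Aux


namespace Aux
variable {M : Matroid α} {I : Set α}

/-- Conditions for one exchange triple `(u, v, C)` relative to independent set `I`. -/
def TripleOK (M : Matroid α) (I : Set α) (p : α × α × Set α) : Prop :=
  p.1 ∈ M.E ∧ p.1 ∉ I ∧ p.2.1 ∈ p.2.2 ∧ p.2.1 ≠ p.1 ∧ p.2.2 ⊆ insert p.1 I ∧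
    ¬M.Indep p.2.2 ∧ ∀ x ∈ p.2.2, M.Indep (p.2.2 \ {x})

lemma TripleOK.v_mem {p : α × α × Set α} (h : TripleOK M I p) : p.2.1 ∈ I := by
  obtain ⟨-, -, hv, hne, hsub, -⟩ := h
  rcases hsub hv with h' | h'
  · exact absurd h' hne
  · exact h'

lemma multi_exchange (hE : M.E.Finite) :
    ∀ (ps : List (α × α × Set α)) (I : Set α), M.Indep I →
    (∀ p ∈ ps, TripleOK M I p) →
    ps.Pairwise (fun p q => p.1 ≠ q.1 ∧ p.2.1 ∉ q.2.2) →
    M.Indep ((I \ {x | ∃ p ∈ ps, x = p.2.1}) ∪ {x | ∃ p ∈ ps, x = p.1}) ∧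
    M.closure ((I \ {x | ∃ p ∈ ps, x = p.2.1}) ∪ {x | ∃ p ∈ ps, x = p.1}) = M.closure I ∧
    ((I \ {x | ∃ p ∈ ps, x = p.2.1}) ∪ {x | ∃ p ∈ ps, x = p.1}).ncard = I.ncard := by
  intro ps
  induction ps with
  | nil =>
    intro I hI _ _
    have h0 : {x | ∃ p ∈ ([] : List (α × α × Set α)), x = p.2.1} = ∅ := by simp
    have h1 : {x | ∃ p ∈ ([] : List (α × α × Set α)), x = p.1} = ∅ := by simp
    rw [h0, h1, diff_empty, union_empty]
    exact ⟨hI, rfl, rfl⟩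
  | cons p tail ih =>
    intro I hI hok hpw
    have hp : TripleOK M I p := hok p (by simp)
    obtain ⟨hu_mem, hu_not, hvC, hvu, hCsub, hCdep, hCmin⟩ := hp
    obtain ⟨hhead, htailpw⟩ := List.pairwise_cons.1 hpw
    obtain ⟨hI1, hcl1, hvI⟩ := swap_lemma hE hI hu_mem hu_not hCsub hCdep hCmin hvC hvu
    set I₁ := insert p.1 (I \ {p.2.1}) with hI₁def
    have hok' : ∀ q ∈ tail, TripleOK M I₁ q := by
      intro q hq
      obtain ⟨h1, h2, h3, h4, h5, h6, h7⟩ := hok q (List.mem_cons_of_mem _ hq)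
      refine ⟨h1, ?_, h3, h4, ?_, h6, h7⟩
      · intro hmem
        rcases hmem with h | ⟨hqI, -⟩
        · exact (hhead q hq).1 h.symm
        · exact h2 hqI
      · intro x hx
        rcases h5 hx with rfl | hxI
        · exact mem_insert _ _
        · refine mem_insert_of_mem _ (mem_insert_of_mem _ ⟨hxI, ?_⟩)
          rintro rfl
          exact (hhead q hq).2 hx
    obtain ⟨hind, hcl, hcard⟩ := ih I₁ hI1 hok' htailpw
    have hvt_notu : ¬ ∃ q ∈ tail, p.1 = q.2.1 := by
      rintro ⟨q, hq, hique⟩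
      exact hu_not (hique ▸ (hok q (List.mem_cons_of_mem _ hq)).v_mem)
    have hIfin : I.Finite := hE.subset hI.subset_ground
    have hcardI1 : I₁.ncard = I.ncard := by
      rw [hI₁def, Set.ncard_insert_of_notMem (fun h => hu_not h.1) hIfin.diff,
        Set.ncard_diff_singleton_of_mem hvI]
      have : 1 ≤ I.ncard := (Set.ncard_pos hIfin).2 ⟨p.2.1, hvI⟩
      omega
    have hsets : (I₁ \ {x | ∃ q ∈ tail, x = q.2.1}) ∪ {x | ∃ q ∈ tail, x = q.1} =
        (I \ {x | ∃ q ∈ p :: tail, x = q.2.1}) ∪ {x | ∃ q ∈ p :: tail, x = q.1} := by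
      ext x
      simp only [hI₁def, mem_union, mem_diff, mem_insert_iff, mem_setOf_eq, mem_singleton_iff,
        List.mem_cons]
      constructor
      · rintro (⟨(rfl | ⟨hxI, hxv⟩), hxVt⟩ | ⟨q, hq, rfl⟩)
        · exact Or.inr ⟨p, Or.inl rfl, rfl⟩
        · refine Or.inl ⟨hxI, ?_⟩
          rintro ⟨q, (rfl | hq), hxq⟩
          · exact hxv hxq
          · exact hxVt ⟨q, hq, hxq⟩
        · exact Or.inr ⟨q, Or.inr hq, rfl⟩
      · rintro (⟨hxI, hxV⟩ | ⟨q, (rfl | hq), rfl⟩)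
        · exact Or.inl ⟨Or.inr ⟨hxI, fun h => hxV ⟨p, Or.inl rfl, h⟩⟩,
            fun ⟨q, hq, hxq⟩ => hxV ⟨q, Or.inr hq, hxq⟩⟩
        · exact Or.inl ⟨Or.inl rfl, fun h => hvt_notu h⟩
        · exact Or.inr ⟨q, hq, rfl⟩
    rw [← hsets]
    exact ⟨hind, by rw [hcl, hcl1], by rw [hcard, hcardI1]⟩

end Aux


namespace Aux
open scoped Classical
variable {M : Matroid α} {k t : ℕ}

noncomputable def loadF (I : Fin k → Set α) (e : α) : ℕ :=
  (Finset.univ.filter fun i => e ∈ I i).card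

def Arc (M : Matroid α) (I : Fin k → Set α) (y x : α) : Prop :=
  y ∈ M.E ∧ x ∈ M.E ∧ x ≠ y ∧ ∃ i C, y ∉ I i ∧ C ⊆ insert y (I i) ∧ ¬M.Indep C ∧
    (∀ z ∈ C, M.Indep (C \ {z})) ∧ x ∈ C

def Reach (M : Matroid α) (t : ℕ) (I : Fin k → Set α) : ℕ → Set α
  | 0 => {e ∈ M.E | loadF I e < t}
  | n+1 => Reach M t I n ∪ {x | ∃ y ∈ Reach M t I n, Arc M I y x}

def Augmentable (M : Matroid α) (I : Fin k → Set α) (y : α) : Prop :=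
  y ∈ M.E ∧ ∃ i, y ∉ I i ∧ M.Indep (insert y (I i))

lemma reach_subset_ground (I : Fin k → Set α) : ∀ n, Reach M t I n ⊆ M.E
  | 0 => fun e he => he.1
  | (n+1) => by
    rintro x (hx | ⟨y, -, -, hxE, -⟩)
    · exact reach_subset_ground I n hx
    · exact hxE

lemma reach_mono (I : Fin k → Set α) {a b : ℕ} (h : a ≤ b) : Reach M t I a ⊆ Reach M t I b := by
  induction b with
  | zero => simpa [Nat.le_zero.1 h]
  | succ b ih =>
    rcases Nat.lt_or_ge a (b+1) with h' | h'
    · exact (ih (Nat.lt_succ_iff.1 h')).trans subset_union_left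
    · have : a = b + 1 := le_antisymm h h'
      simp [this]

lemma sum_card_filter (S : Finset α) (I : Fin k → Set α) :
    ∑ i : Fin k, (S.filter (· ∈ I i)).card = ∑ e ∈ S, loadF I e := by
  simp only [Finset.card_filter, loadF]
  rw [Finset.sum_comm]

lemma no_augment_count (hE : M.E.Finite) (I : Fin k → Set α) (hind : ∀ i, M.Indep (I i))
    (hload : ∀ e, loadF I e ≤ t)
    (hna : ∀ n y, y ∈ Reach M t I n → ¬ Augmentable M I y) :
    ∑ i, (I i).ncard = k * mrk M (⋃ n, Reach M t I n) + t * (M.E \ ⋃ n, Reach M t I n).ncard := by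
  set R := ⋃ n, Reach M t I n with hRdef
  have hRE : R ⊆ M.E := by
    rintro x hx
    obtain ⟨n, hn⟩ := mem_iUnion.1 hx
    exact reach_subset_ground I n hn
  have hspan : ∀ i, R ⊆ M.closure (I i ∩ R) := by
    intro i y hy
    obtain ⟨n, hn⟩ := mem_iUnion.1 hy
    by_cases hyI : y ∈ I i
    · exact M.subset_closure _ ((inter_subset_left).trans (hind i).subset_ground) ⟨hyI, hy⟩
    · have hyE : y ∈ M.E := hRE hy
      have hdep : ¬ M.Indep (insert y (I i)) := by
        intro hcon
        exact hna n y hn ⟨hyE, i, hyI, hcon⟩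
      obtain ⟨C, hCsub, hCdep, hCmin⟩ := exists_circuit
        (insert_subset hyE (hind i).subset_ground)
        ((hE.subset (hind i).subset_ground).insert y) hdep
      have hyC : y ∈ C := circuit_mem_insert (hind i) hCsub hCdep
      have hycl : y ∈ M.closure (C \ {y}) :=
        circuit_mem_closure (hCsub.trans (insert_subset hyE (hind i).subset_ground)) hCdep
          hCmin hyC
      refine M.closure_subset_closure ?_ hycl
      rintro z ⟨hzC, hzy⟩
      have hzI : z ∈ I i := by
        rcases hCsub hzC with rfl | h
        · exact absurd rfl hzy
        · exact h
      refine ⟨hzI, mem_iUnion.2 ⟨n+1, Or.inr ⟨y, hn, hyE, (hind i).subset_ground hzI, hzy, i, C,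
        hyI, hCsub, hCdep, hCmin, hzC⟩⟩⟩
  have hrkR : ∀ i, (I i ∩ R).ncard = mrk M R := fun i =>
    (mrk_eq_of_spanned hE hRE ((hind i).inter_right R) inter_subset_right (hspan i)).symm
  have hdfin : (M.E \ R).Finite := hE.subset diff_subset
  have hdiffcard : ∀ i, (I i \ R).ncard = (hdfin.toFinset.filter (· ∈ I i)).card := by
    intro i
    have : I i \ R = ↑(hdfin.toFinset.filter (· ∈ I i)) := by
      ext e
      simp only [Finset.coe_filter, Set.Finite.mem_toFinset, mem_diff, mem_setOf_eq]
      constructor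
      · rintro ⟨h1, h2⟩; exact ⟨⟨(hind i).subset_ground h1, h2⟩, h1⟩
      · rintro ⟨⟨-, h2⟩, h1⟩; exact ⟨h1, h2⟩
    rw [this, Set.ncard_coe_finset]
  have hloadt : ∀ e ∈ hdfin.toFinset, loadF I e = t := by
    intro e he
    rw [Set.Finite.mem_toFinset] at he
    have h0 : e ∉ Reach M t I 0 := fun h => he.2 (mem_iUnion.2 ⟨0, h⟩)
    have : ¬ loadF I e < t := fun hlt => h0 ⟨he.1, hlt⟩
    have h2 := hload e
    omega
  have hsplit : ∀ i : Fin k, (I i).ncard = (I i ∩ R).ncard + (I i \ R).ncard := fun i =>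
    (Set.ncard_inter_add_ncard_diff_eq_ncard (I i) R (hE.subset (hind i).subset_ground)).symm
  calc ∑ i, (I i).ncard = ∑ i : Fin k, ((I i ∩ R).ncard + (I i \ R).ncard) :=
        Finset.sum_congr rfl (fun i _ => hsplit i)
    _ = (∑ i : Fin k, (I i ∩ R).ncard) + ∑ i : Fin k, (I i \ R).ncard :=
        Finset.sum_add_distrib
    _ = k * mrk M R + t * (M.E \ R).ncard := by
        congr 1
        · rw [Finset.sum_congr rfl (fun i _ => hrkR i), Finset.sum_const, Finset.card_univ,
            Fintype.card_fin, smul_eq_mul]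
        · rw [Finset.sum_congr rfl (fun i _ => hdiffcard i), sum_card_filter,
            Finset.sum_congr rfl hloadt, Finset.sum_const, smul_eq_mul,
            ← Set.ncard_eq_toFinset_card _ hdfin, mul_comm]
end Aux


namespace Aux
open scoped Classical
variable {M : Matroid α} {k t : ℕ}

lemma exists_path (I : Fin k → Set α) :
    ∀ n z, z ∈ Reach M t I n → (1 ≤ n → z ∉ Reach M t I (n-1)) →
    ∃ y : ℕ → α, y n = z ∧ (∀ τ, τ ≤ n → y τ ∈ Reach M t I τ) ∧
      (∀ τ, 1 ≤ τ → τ ≤ n → y τ ∉ Reach M t I (τ-1) ∧ Arc M I (y (τ-1)) (y τ)) := by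
  intro n
  induction n with
  | zero =>
    intro z hz _
    refine ⟨fun _ => z, rfl, fun τ hτ => ?_, fun τ h1 h2 => by omega⟩
    obtain rfl : τ = 0 := Nat.le_zero.1 hτ
    exact hz
  | succ n ih =>
    intro z hz hz'
    have hz1 : z ∉ Reach M t I n := by simpa using hz' (by omega)
    have hzmem : ∃ v ∈ Reach M t I n, Arc M I v z := by
      rcases hz with h | h
      · exact absurd h hz1
      · exact h
    obtain ⟨v, hv, harc⟩ := hzmem
    have hvex : ∃ n', v ∈ Reach M t I n' := ⟨n, hv⟩
    set d := Nat.find hvex with hd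
    have hdle : d ≤ n := Nat.find_le hv
    have hdn : d = n := by
      rcases Nat.lt_or_ge d n with hlt | hge
      · exfalso
        apply hz1
        have : z ∈ Reach M t I (d+1) :=
          Or.inr ⟨v, Nat.find_spec hvex, harc⟩
        exact reach_mono I (by omega) this
      · omega
    have hvn : v ∈ Reach M t I n := hdn ▸ Nat.find_spec hvex
    have hvmin : 1 ≤ n → v ∉ Reach M t I (n-1) := by
      intro h1 hcon
      have := Nat.find_min hvex (show n - 1 < d by omega)
      exact this hcon
    obtain ⟨y', hy'n, hy'mem, hy'arc⟩ := ih v hvn hvmin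
    refine ⟨fun τ => if τ = n+1 then z else y' τ, by simp, ?_, ?_⟩
    · intro τ hτ
      by_cases hτ' : τ = n + 1
      · simpa [hτ'] using hz
      · have : τ ≤ n := by omega
        simpa [hτ'] using hy'mem τ this
    · intro τ h1 h2
      by_cases hτ' : τ = n + 1
      · subst hτ'
        have hne : ¬ (n + 1 - 1 = n + 1) := by omega
        constructor
        · simpa [hne] using hz1
        · simpa [hne, hy'n] using harc
      · have hτn : τ ≤ n := by omega
        have hne1 : ¬ (τ - 1 = n + 1) := by omega
        obtain ⟨ha, hb⟩ := hy'arc τ h1 hτn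
        constructor
        · simpa [hτ', hne1] using ha
        · simpa [hτ', hne1] using hb
end Aux


namespace Aux
open scoped Classical
variable {M : Matroid α} {k t : ℕ}

lemma augment_step (hE : M.E.Finite) (I : Fin k → Set α) (hind : ∀ i, M.Indep (I i))
    (hload : ∀ e, loadF I e ≤ t)
    (hex : ∃ n, ∃ y ∈ Reach M t I n, Augmentable M I y) :
    ∃ I' : Fin k → Set α, (∀ i, M.Indep (I' i)) ∧ (∀ e, loadF I' e ≤ t) ∧
      ∑ i, (I' i).ncard = (∑ i, (I i).ncard) + 1 := by
  set m := Nat.find hex with hm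
  obtain ⟨z, hzR, hzaug⟩ := Nat.find_spec hex
  obtain ⟨zE, j₀, hzj₀, hzins⟩ := hzaug
  have hzmin : 1 ≤ m → z ∉ Reach M t I (m-1) := by
    intro h1 hcon
    exact Nat.find_min hex (show m - 1 < m by omega) ⟨z, hcon, zE, j₀, hzj₀, hzins⟩
  obtain ⟨y, hym, hp2, hp3⟩ := exists_path I m z hzR hzmin
  have hyE : ∀ τ, τ ≤ m → y τ ∈ M.E := fun τ hτ => reach_subset_ground I τ (hp2 τ hτ)
  have hinj : ∀ a b, a ≤ m → b ≤ m → y a = y b → a = b := by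
    have key : ∀ a b, a < b → b ≤ m → y a ≠ y b := by
      intro a b hab hbm heq
      have h1 : y a ∈ Reach M t I a := hp2 a (by omega)
      have h2 : y b ∉ Reach M t I (b-1) := (hp3 b (by omega) hbm).1
      exact h2 (heq ▸ reach_mono I (by omega) h1)
    intro a b ham hbm heq
    rcases lt_trichotomy a b with h | h | h
    · exact absurd heq (key a b h hbm)
    · exact h
    · exact absurd heq.symm (key b a h ham)
  have harcprops : ∀ τ, ∃ ic : Fin k × Set α, 1 ≤ τ → τ ≤ m →
      (y (τ-1) ∉ I ic.1 ∧ ic.2 ⊆ insert (y (τ-1)) (I ic.1) ∧ ¬M.Indep ic.2 ∧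
        (∀ x ∈ ic.2, M.Indep (ic.2 \ {x})) ∧ y τ ∈ ic.2) := by
    intro τ
    by_cases h : 1 ≤ τ ∧ τ ≤ m
    · obtain ⟨-, -, -, i, C, hC1, hC2, hC3, hC4, hC5⟩ := (hp3 τ h.1 h.2).2
      exact ⟨(i, C), fun _ _ => ⟨hC1, hC2, hC3, hC4, hC5⟩⟩
    · exact ⟨(j₀, ∅), fun h1 h2 => absurd ⟨h1, h2⟩ h⟩
  choose w hw using harcprops
  have hmemcur : ∀ τ, 1 ≤ τ → τ ≤ m → y τ ∈ I (w τ).1 := by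
    intro τ h1 h2
    obtain ⟨-, hsub, -, -, hmem⟩ := hw τ h1 h2
    rcases hsub hmem with h | h
    · exact absurd (hinj τ (τ-1) h2 (by omega) h) (by omega)
    · exact h
  have hnofwd : ∀ a b, 1 ≤ b → b + 1 ≤ a → a ≤ m → y a ∉ (w b).2 := by
    intro a b hb1 hba ham hmem
    obtain ⟨hw1, hw2, hw3, hw4, hw5⟩ := hw b hb1 (by omega)
    have hane : y a ≠ y (b-1) := fun h => by
      have := hinj a (b-1) ham (by omega) h
      omega
    have harc : Arc M I (y (b-1)) (y a) :=
      ⟨hyE (b-1) (by omega), hyE a ham, hane, (w b).1, (w b).2, hw1, hw2, hw3, hw4, hmem⟩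
    have h1 : y a ∈ Reach M t I ((b-1)+1) :=
      Or.inr ⟨y (b-1), hp2 (b-1) (by omega), harc⟩
    exact (hp3 a (by omega) ham).1 (reach_mono I (by omega : (b-1)+1 ≤ a-1) h1)
  -- the lists of exchange triples
  set f : ℕ → α × α × Set α := fun τ => (y (τ-1), y τ, (w τ).2) with hf
  set ts : Fin k → List ℕ :=
    fun i => (((List.range m).map (· + 1)).filter (fun τ => (w τ).1 = i)).reverse with hts
  set ps : Fin k → List (α × α × Set α) := fun i => (ts i).map f with hps
  have hmem_ts : ∀ i τ, τ ∈ ts i ↔ (1 ≤ τ ∧ τ ≤ m ∧ (w τ).1 = i) := by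
    intro i τ
    simp only [hts, List.mem_reverse, List.mem_filter, List.mem_map, List.mem_range,
      decide_eq_true_eq]
    constructor
    · rintro ⟨⟨a, ha, rfl⟩, h2⟩
      exact ⟨by omega, by omega, h2⟩
    · rintro ⟨h1, h2, h3⟩
      exact ⟨⟨τ - 1, by omega, by omega⟩, h3⟩
  have hts_sorted : ∀ i, (ts i).Pairwise (fun a b => b < a) := by
    intro i
    rw [hts, List.pairwise_reverse]
    exact ((List.pairwise_lt_range (n := m)).map _ (fun a b h => by omega)).sublist
      List.filter_sublist |>.imp (fun h => h)
  have htripok : ∀ i, ∀ p ∈ ps i, TripleOK M (I i) p := by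
    intro i p hp
    obtain ⟨τ, hτts, rfl⟩ := List.mem_map.1 hp
    obtain ⟨h1, h2, h3⟩ := (hmem_ts i τ).1 hτts
    obtain ⟨hw1, hw2, hw3, hw4, hw5⟩ := hw τ h1 h2
    refine ⟨hyE (τ-1) (by omega), h3 ▸ hw1, hw5, ?_, h3 ▸ hw2, hw3, hw4⟩
    intro h
    have := hinj τ (τ-1) h2 (by omega) h
    omega
  have hpw : ∀ i, (ps i).Pairwise (fun p q => p.1 ≠ q.1 ∧ p.2.1 ∉ q.2.2) := by
    intro i
    rw [hps, List.pairwise_map]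
    refine (hts_sorted i).imp_of_mem ?_
    intro a b hain hbin hba
    obtain ⟨ha1, ha2, ha3⟩ := (hmem_ts i a).1 hain
    obtain ⟨hb1, hb2, hb3⟩ := (hmem_ts i b).1 hbin
    constructor
    · intro h
      have := hinj (a-1) (b-1) (by omega) (by omega) h
      omega
    · exact hnofwd a b hb1 (by omega) ha2
  set J : Fin k → Set α :=
    fun i => (I i \ {x | ∃ p ∈ ps i, x = p.2.1}) ∪ {x | ∃ p ∈ ps i, x = p.1} with hJ
  have hJprops : ∀ i, M.Indep (J i) ∧ M.closure (J i) = M.closure (I i) ∧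
      (J i).ncard = (I i).ncard := fun i =>
    multi_exchange hE (ps i) (I i) (hind i) (htripok i) (hpw i)
  have hmemV : ∀ i x, (∃ p ∈ ps i, x = p.2.1) ↔
      ∃ τ, 1 ≤ τ ∧ τ ≤ m ∧ (w τ).1 = i ∧ x = y τ := by
    intro i x
    constructor
    · rintro ⟨p, hp, rfl⟩
      obtain ⟨τ, hτts, rfl⟩ := List.mem_map.1 hp
      obtain ⟨h1, h2, h3⟩ := (hmem_ts i τ).1 hτts
      exact ⟨τ, h1, h2, h3, rfl⟩
    · rintro ⟨τ, h1, h2, h3, rfl⟩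
      exact ⟨f τ, List.mem_map.2 ⟨τ, (hmem_ts i τ).2 ⟨h1, h2, h3⟩, rfl⟩, rfl⟩
  have hmemU : ∀ i x, (∃ p ∈ ps i, x = p.1) ↔
      ∃ τ, 1 ≤ τ ∧ τ ≤ m ∧ (w τ).1 = i ∧ x = y (τ-1) := by
    intro i x
    constructor
    · rintro ⟨p, hp, rfl⟩
      obtain ⟨τ, hτts, rfl⟩ := List.mem_map.1 hp
      obtain ⟨h1, h2, h3⟩ := (hmem_ts i τ).1 hτts
      exact ⟨τ, h1, h2, h3, rfl⟩
    · rintro ⟨τ, h1, h2, h3, rfl⟩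
      exact ⟨f τ, List.mem_map.2 ⟨τ, (hmem_ts i τ).2 ⟨h1, h2, h3⟩, rfl⟩, rfl⟩
  -- the new family
  set I' : Fin k → Set α := fun j => if j = j₀ then insert (y m) (J j₀) else J j with hI'
  have hymcl : y m ∉ M.closure (I j₀) := by
    have h2 := ((hind j₀).insert_indep_iff_of_notMem hzj₀).1 hzins
    rw [hym]
    exact h2.2
  have hymclJ : y m ∉ M.closure (J j₀) := by rw [(hJprops j₀).2.1]; exact hymcl
  have hymJ : y m ∉ J j₀ := fun h =>
    hymclJ (M.subset_closure _ (hJprops j₀).1.subset_ground h)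
  have hI'ind : ∀ j, M.Indep (I' j) := by
    intro j
    by_cases hj : j = j₀
    · simp only [hI', if_pos hj]
      rw [(hJprops j₀).1.insert_indep_iff_of_notMem hymJ]
      exact ⟨hym ▸ zE, hymclJ⟩
    · simp only [hI', if_neg hj]
      exact (hJprops j).1
  have hI'card : ∑ j, (I' j).ncard = (∑ j, (I j).ncard) + 1 := by
    have hcards : ∀ j, (I' j).ncard = (I j).ncard + if j = j₀ then 1 else 0 := by
      intro j
      by_cases hj : j = j₀
      · simp only [hI', if_pos hj, hj, if_pos rfl]
        rw [Set.ncard_insert_of_notMem hymJ (hE.subset (hJprops j₀).1.subset_ground),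
          (hJprops j₀).2.2]
        simp
      · simp only [hI', if_neg hj]
        rw [(hJprops j).2.2, add_zero]
    rw [Finset.sum_congr rfl (fun j _ => hcards j), Finset.sum_add_distrib,
      Finset.sum_ite_eq' Finset.univ j₀ (fun _ => 1), if_pos (Finset.mem_univ _)]
  refine ⟨I', hI'ind, ?_, hI'card⟩
  -- load bounds
  have hmemI' : ∀ j x, x ∈ I' j ↔ ((j = j₀ ∧ x = y m) ∨ x ∈ J j) := by
    intro j x
    by_cases hj : j = j₀
    · simp only [hI', if_pos hj, mem_insert_iff]
      constructor
      · rintro (rfl | h)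
        · exact Or.inl ⟨hj, rfl⟩
        · exact Or.inr (by rw [hj]; exact h)
      · rintro (⟨-, rfl⟩ | h)
        · exact Or.inl rfl
        · exact Or.inr (by rw [hj] at h; exact h)
    · simp only [hI', if_neg hj]
      constructor
      · exact fun h => Or.inr h
      · rintro (⟨hc, -⟩ | h)
        · exact absurd hc hj
        · exact h
  intro e
  by_cases hcase : ∃ τ, τ ≤ m ∧ e = y τ
  · obtain ⟨τ₀, hτ₀m, rfl⟩ := hcase
    by_cases hτ₀ : 1 ≤ τ₀
    · -- internal or final vertex
      set cur := (w τ₀).1 with hcur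
      set nxt := if τ₀ = m then j₀ else (w (τ₀+1)).1 with hnxt
      have hsub : Finset.univ.filter (fun j => y τ₀ ∈ I' j) ⊆
          insert nxt ((Finset.univ.filter (fun j => y τ₀ ∈ I j)).erase cur) := by
        intro j hj
        rw [Finset.mem_filter] at hj
        by_cases hjn : j = nxt
        · exact Finset.mem_insert.2 (Or.inl hjn)
        · refine Finset.mem_insert.2 (Or.inr ?_)
          rcases (hmemI' j _).1 hj.2 with ⟨rfl, heq⟩ | hJmem
          · -- j = j₀ and y τ₀ = y m, so τ₀ = m and nxt = j₀
            exfalso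
            have : τ₀ = m := hinj τ₀ m hτ₀m le_rfl heq
            exact hjn (by rw [hnxt, if_pos this])
          · rcases hJmem with ⟨hIj, hVj⟩ | hUj
            · refine Finset.mem_erase.2 ⟨?_, Finset.mem_filter.2 ⟨Finset.mem_univ _, hIj⟩⟩
              intro hjc
              exact hVj ((hmemV j _).2 ⟨τ₀, hτ₀, hτ₀m, hjc.symm, rfl⟩)
            · exfalso
              obtain ⟨τ, h1, h2, h3, heq⟩ := (hmemU j _).1 hUj
              have hττ₀ : τ - 1 = τ₀ := hinj (τ-1) τ₀ (by omega) hτ₀m heq.symm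
              have hττ : τ = τ₀ + 1 := by omega
              have hτ₀lt : τ₀ < m := by omega
              exact hjn (by rw [hnxt, if_neg (by omega), ← h3, hττ])
      have hcurmem : cur ∈ Finset.univ.filter (fun j => y τ₀ ∈ I j) :=
        Finset.mem_filter.2 ⟨Finset.mem_univ _, hmemcur τ₀ hτ₀ hτ₀m⟩
      have h1 : loadF I' (y τ₀) ≤
          ((Finset.univ.filter (fun j => y τ₀ ∈ I j)).erase cur).card + 1 :=
        le_trans (Finset.card_le_card hsub) (Finset.card_insert_le _ _)
      rw [Finset.card_erase_of_mem hcurmem] at h1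
      have h2 : 0 < loadF I (y τ₀) := Finset.card_pos.2 ⟨cur, hcurmem⟩
      have h3 := hload (y τ₀)
      simp only [loadF] at h1 h2 h3 ⊢
      omega
    · -- τ₀ = 0 : the source vertex
      have hτ₀0 : τ₀ = 0 := by omega
      subst hτ₀0
      set nxt := if m = 0 then j₀ else (w 1).1 with hnxt
      have hsub : Finset.univ.filter (fun j => y 0 ∈ I' j) ⊆
          insert nxt (Finset.univ.filter (fun j => y 0 ∈ I j)) := by
        intro j hj
        rw [Finset.mem_filter] at hj
        by_cases hjn : j = nxt
        · exact Finset.mem_insert.2 (Or.inl hjn)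
        · refine Finset.mem_insert.2 (Or.inr ?_)
          rcases (hmemI' j _).1 hj.2 with ⟨rfl, heq⟩ | hJmem
          · exfalso
            have hm0 : m = 0 := (hinj 0 m (by omega) le_rfl heq).symm
            exact hjn (by rw [hnxt, if_pos hm0])
          · rcases hJmem with ⟨hIj, -⟩ | hUj
            · exact Finset.mem_filter.2 ⟨Finset.mem_univ _, hIj⟩
            · exfalso
              obtain ⟨τ, h1, h2, h3, heq⟩ := (hmemU j _).1 hUj
              have hτ1 : τ - 1 = 0 := hinj (τ-1) 0 (by omega) (by omega) heq.symm
              have : τ = 1 := by omega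
              subst this
              exact hjn (by rw [hnxt, if_neg (by omega), h3])
      have hy0 : y 0 ∈ Reach M t I 0 := hp2 0 (by omega)
      have hlt : loadF I (y 0) < t := hy0.2
      have h1 : loadF I' (y 0) ≤ (Finset.univ.filter (fun j => y 0 ∈ I j)).card + 1 :=
        le_trans (Finset.card_le_card hsub) (Finset.card_insert_le _ _)
      simp only [loadF] at h1 hlt ⊢
      omega
  · -- e is not on the path: memberships unchanged
    have hsame : ∀ j, e ∈ I' j ↔ e ∈ I j := by
      intro j
      rw [hmemI']
      constructor
      · rintro (⟨-, rfl⟩ | hJmem)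
        · exact absurd ⟨m, le_rfl, rfl⟩ hcase
        · rcases hJmem with ⟨hIj, -⟩ | hUj
          · exact hIj
          · exfalso
            obtain ⟨τ, h1, h2, -, heq⟩ := (hmemU j _).1 hUj
            exact hcase ⟨τ - 1, by omega, heq⟩
      · intro hIj
        refine Or.inr (Or.inl ⟨hIj, fun hVj => ?_⟩)
        obtain ⟨τ, h1, h2, -, heq⟩ := (hmemV j _).1 hVj
        exact hcase ⟨τ, h2, heq⟩
    have : loadF I' e = loadF I e := by
      simp only [loadF]
      congr 1
      exact Finset.filter_congr (fun j _ => by rw [hsame j])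
    rw [this]
    exact hload e
end Aux


namespace Aux
open scoped Classical
variable {M : Matroid α}

lemma packing (hE : M.E.Finite) {k t : ℕ}
    (hcond : ∀ X, X ⊆ M.E → k * mrk M M.E ≤ k * mrk M X + t * (M.E \ X).ncard) :
    ∃ Bs : Fin k → Set α, (∀ i, M.IsBase (Bs i)) ∧ ∀ e, loadF Bs e ≤ t := by
  have key : ∀ d (I : Fin k → Set α), (∀ i, M.Indep (I i)) → (∀ e, loadF I e ≤ t) →
      k * mrk M M.E ≤ (∑ i, (I i).ncard) + d →
      ∃ Bs : Fin k → Set α, (∀ i, M.IsBase (Bs i)) ∧ ∀ e, loadF Bs e ≤ t := by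
    intro d
    induction d with
    | zero =>
      intro I hind hload htot
      have hle : ∀ i, (I i).ncard ≤ mrk M M.E := fun i =>
        le_mrk hE (hind i) (hind i).subset_ground
      have heach : ∀ i : Fin k, (I i).ncard = mrk M M.E := by
        by_contra hne
        push_neg at hne
        obtain ⟨i, hi⟩ := hne
        have hlt : (I i).ncard < mrk M M.E := lt_of_le_of_ne (hle i) hi
        have : ∑ j, (I j).ncard < ∑ _j : Fin k, mrk M M.E :=
          Finset.sum_lt_sum (fun j _ => hle j) ⟨i, Finset.mem_univ i, hlt⟩
        rw [Finset.sum_const, Finset.card_univ, Fintype.card_fin, smul_eq_mul] at this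
        omega
      exact ⟨I, fun i => base_of_indep_ncard hE (hind i) (heach i).ge, hload⟩
    | succ d ih =>
      intro I hind hload htot
      by_cases hdone : k * mrk M M.E ≤ ∑ i, (I i).ncard
      · exact ih I hind hload (by omega)
      · have hexaug : ∃ n, ∃ y ∈ Reach M t I n, Augmentable M I y := by
          by_contra hno
          push_neg at hno
          have hcount := no_augment_count hE I hind hload (fun n y hy => hno n y hy)
          have hRE : (⋃ n, Reach M t I n) ⊆ M.E := by
            rintro x hx
            obtain ⟨n, hn⟩ := mem_iUnion.1 hx
            exact reach_subset_ground I n hn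
          have := hcond _ hRE
          omega
        obtain ⟨I', h1, h2, h3⟩ := augment_step hE I hind hload hexaug
        exact ih I' h1 h2 (by omega)
  refine key (k * mrk M M.E) (fun _ => ∅) (fun _ => M.empty_indep) ?_ (by simp)
  intro e
  simp [loadF]
end Aux


namespace Aux
open scoped Classical
variable {M : Matroid α} {k : ℕ}

lemma phi_props (hE : M.E.Finite) (hrk : 1 ≤ mrk M M.E) :
    ∃ A, A ⊆ M.E ∧ mrk M (M.E \ A) < mrk M M.E ∧ A.Nonempty ∧
      (A.ncard : ℝ) / ((mrk M M.E : ℝ) - (mrk M (M.E \ A) : ℝ)) = PhiM M ∧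
      0 < PhiM M ∧
      ∀ B, B ⊆ M.E → mrk M (M.E \ B) < mrk M M.E →
        PhiM M ≤ (B.ncard : ℝ) / ((mrk M M.E : ℝ) - (mrk M (M.E \ B) : ℝ)) := by
  set S := {x : ℝ | ∃ A ⊆ M.E, mrk M (M.E \ A) < mrk M M.E ∧
    x = (A.ncard : ℝ) / ((mrk M M.E : ℝ) - (mrk M (M.E \ A) : ℝ))} with hS
  have hSfin : S.Finite := by
    have h1 : S ⊆ (fun A : Set α => (A.ncard : ℝ) /
        ((mrk M M.E : ℝ) - (mrk M (M.E \ A) : ℝ))) '' {A | A ⊆ M.E} := by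
      rintro x ⟨A, hA, -, rfl⟩
      exact ⟨A, hA, rfl⟩
    exact (hE.finite_subsets.image _).subset h1
  have hSne : S.Nonempty := by
    refine ⟨(M.E.ncard : ℝ) / ((mrk M M.E : ℝ) - (mrk M (M.E \ M.E) : ℝ)), M.E,
      Subset.rfl, ?_, rfl⟩
    rw [diff_self, mrk_indep hE M.empty_indep, Set.ncard_empty]
    omega
  have hpos : ∀ x ∈ S, 0 < x := by
    rintro x ⟨A, hA, hdrop, rfl⟩
    have hAne : A.Nonempty := by
      rcases A.eq_empty_or_nonempty with rfl | h
      · rw [diff_empty] at hdrop; omega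
      · exact h
    apply div_pos
    · exact_mod_cast (Set.ncard_pos (hE.subset hA)).2 hAne
    · have : (mrk M (M.E \ A) : ℝ) < (mrk M M.E : ℝ) := by exact_mod_cast hdrop
      linarith
  have hmem : PhiM M ∈ S := hSne.csInf_mem hSfin
  obtain ⟨A, hA, hdrop, heq⟩ := hmem
  have hAne : A.Nonempty := by
    rcases A.eq_empty_or_nonempty with rfl | h
    · rw [diff_empty] at hdrop; omega
    · exact h
  refine ⟨A, hA, hdrop, hAne, heq.symm, ?_, ?_⟩
  · rw [heq]
    exact hpos _ ⟨A, hA, hdrop, rfl⟩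
  · intro B hB hdropB
    exact csInf_le hSfin.bddBelow ⟨B, hB, hdropB, rfl⟩

lemma relLoad_eq (Bs : Fin k → Set α) (e : α) :
    relLoad Bs e = (loadF Bs e : ℝ) / (k : ℝ) := by
  unfold relLoad loadF
  congr 2
  rw [Set.ncard_eq_toFinset_card']
  congr 1
  ext i
  simp

lemma load_lower (hE : M.E.Finite) (Bs : Fin k → Set α) (hBs : ∀ i, M.IsBase (Bs i))
    {A : Set α} (hA : A ⊆ M.E) (hdrop : mrk M (M.E \ A) < mrk M M.E) :
    ∃ e ∈ A, k * (mrk M M.E - mrk M (M.E \ A)) ≤ A.ncard * loadF Bs e := by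
  have hAfin : A.Finite := hE.subset hA
  have hAne : A.Nonempty := by
    rcases A.eq_empty_or_nonempty with rfl | h
    · rw [diff_empty] at hdrop; omega
    · exact h
  set r := mrk M M.E with hr
  set r' := mrk M (M.E \ A) with hr'
  have hint : ∀ i, r - r' ≤ (hAfin.toFinset.filter (· ∈ Bs i)).card := by
    intro i
    have h1 : (Bs i).ncard = r := base_ncard hE (hBs i)
    have h2 : (Bs i \ A).ncard ≤ r' :=
      le_mrk hE ((hBs i).indep.diff A) (diff_subset_diff_left (hBs i).subset_ground)
    have h3 : (Bs i ∩ A).ncard + (Bs i \ A).ncard = (Bs i).ncard :=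
      Set.ncard_inter_add_ncard_diff_eq_ncard _ _ (hE.subset (hBs i).subset_ground)
    have h4 : (Bs i ∩ A).ncard = (hAfin.toFinset.filter (· ∈ Bs i)).card := by
      rw [← Set.ncard_coe_finset]
      congr 1
      ext x
      simp only [Finset.coe_filter, Set.Finite.mem_toFinset, mem_inter_iff, mem_setOf_eq]
      tauto
    omega
  have hsum : k * (r - r') ≤ ∑ e ∈ hAfin.toFinset, loadF Bs e := by
    rw [← sum_card_filter]
    calc k * (r - r') = ∑ _i : Fin k, (r - r') := by
          rw [Finset.sum_const, Finset.card_univ, Fintype.card_fin, smul_eq_mul]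
      _ ≤ _ := Finset.sum_le_sum (fun i _ => hint i)
  have hne : hAfin.toFinset.Nonempty := by
    rwa [Set.Finite.toFinset_nonempty]
  have hcards : hAfin.toFinset.card = A.ncard := (Set.ncard_eq_toFinset_card _ hAfin).symm
  have hsum2 : ∑ _e ∈ hAfin.toFinset, (k * (r - r')) ≤
      ∑ e ∈ hAfin.toFinset, A.ncard * loadF Bs e := by
    rw [Finset.sum_const, smul_eq_mul, ← Finset.mul_sum, hcards]
    calc A.ncard * (k * (r - r')) = (k * (r - r')) * A.ncard := by ring
      _ ≤ _ := by
        rw [mul_comm (A.ncard)]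
        exact Nat.mul_le_mul_right _ hsum
  obtain ⟨e, he, hle⟩ := Finset.exists_le_of_sum_le hne hsum2
  exact ⟨e, (Set.Finite.mem_toFinset _).1 he, hle⟩

lemma ground_nonempty_of_rk (hE : M.E.Finite) (hrk : 1 ≤ mrk M M.E) : M.E.Nonempty := by
  obtain ⟨B, hB⟩ := M.exists_isBase
  have h1 : B.ncard = mrk M M.E := base_ncard hE hB
  have hBne : B.Nonempty := by
    rw [← Set.ncard_pos (hE.subset hB.subset_ground)]
    omega
  exact ⟨hBne.choose, hB.subset_ground hBne.choose_spec⟩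

lemma part2 (hE : M.E.Finite) (hrk : 1 ≤ mrk M M.E) (Bs : Fin k → Set α) (hk : 0 < k)
    (hBs : ∀ i, M.IsBase (Bs i)) :
    1 / sSup ((fun e => relLoad Bs e) '' M.E) ≤ PhiM M := by
  obtain ⟨A, hA, hdrop, hAne, hAeq, hPpos, hmin⟩ := phi_props hE hrk
  set r := mrk M M.E with hr
  set r' := mrk M (M.E \ A) with hr'
  set L := sSup ((fun e => relLoad Bs e) '' M.E) with hL
  have himfin : ((fun e => relLoad Bs e) '' M.E).Finite := hE.image _
  obtain ⟨e, heA, hcnt⟩ := load_lower hE Bs hBs hA hdrop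
  have hApos : (0:ℝ) < (A.ncard : ℝ) := by
    exact_mod_cast (Set.ncard_pos (hE.subset hA)).2 hAne
  have hdr : (0:ℝ) < (r : ℝ) - (r' : ℝ) := by
    have : (r' : ℝ) < (r : ℝ) := by exact_mod_cast hdrop
    linarith
  have hkpos : (0:ℝ) < (k : ℝ) := by exact_mod_cast hk
  have hcntR : (k : ℝ) * ((r : ℝ) - (r' : ℝ)) ≤ (A.ncard : ℝ) * (loadF Bs e : ℝ) := by
    have := hcnt
    have hcast : ((k * (r - r') : ℕ) : ℝ) ≤ ((A.ncard * loadF Bs e : ℕ) : ℝ) := by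
      exact_mod_cast hcnt
    rw [Nat.cast_mul, Nat.cast_mul, Nat.cast_sub hdrop.le] at hcast
    exact hcast
  have hrel : ((r : ℝ) - (r' : ℝ)) / (A.ncard : ℝ) ≤ relLoad Bs e := by
    rw [relLoad_eq, div_le_div_iff₀ hApos hkpos]
    linarith
  have hLge : relLoad Bs e ≤ L := le_csSup himfin.bddAbove ⟨e, hA heA, rfl⟩
  have hfrac_pos : (0:ℝ) < ((r : ℝ) - (r' : ℝ)) / (A.ncard : ℝ) := div_pos hdr hApos
  have h1 : 1 / L ≤ 1 / (((r : ℝ) - (r' : ℝ)) / (A.ncard : ℝ)) :=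
    one_div_le_one_div_of_le hfrac_pos (hrel.trans hLge)
  rw [one_div_div] at h1
  rw [← hAeq]
  exact h1

end Aux


namespace Aux
open scoped Classical
variable {M : Matroid α}

lemma part1 (hE : M.E.Finite) (hrk : 1 ≤ mrk M M.E) :
    ∃ (k : ℕ) (Bs : Fin k → Set α), 0 < k ∧ (∀ i, M.IsBase (Bs i)) ∧
      1 / sSup ((fun e => relLoad Bs e) '' M.E) = PhiM M := by
  classical
  obtain ⟨A, hA, hdrop, hAne, hAeq, hPpos, hmin⟩ := phi_props hE hrk
  set r := mrk M M.E with hr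
  set r' := mrk M (M.E \ A) with hr'
  set k := A.ncard with hk
  set t := r - r' with ht
  have hkpos : 0 < k := (Set.ncard_pos (hE.subset hA)).2 hAne
  have htpos : 0 < t := by omega
  have hkR : (0:ℝ) < (k:ℝ) := by exact_mod_cast hkpos
  have htR : (0:ℝ) < (t:ℝ) := by exact_mod_cast htpos
  have htcast : (t : ℝ) = (r : ℝ) - (r' : ℝ) := by
    rw [ht, Nat.cast_sub hdrop.le]
  have hPhi : PhiM M = (k : ℝ) / (t : ℝ) := by
    rw [← hAeq, htcast]
  -- packing condition
  have hcond : ∀ X, X ⊆ M.E → k * mrk M M.E ≤ k * mrk M X + t * (M.E \ X).ncard := by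
    intro X hX
    by_cases hXr : mrk M X < r
    · have hBdrop : mrk M (M.E \ (M.E \ X)) < mrk M M.E := by
        rwa [Set.diff_diff_cancel_left hX]
      have h1 := hmin (M.E \ X) diff_subset hBdrop
      rw [Set.diff_diff_cancel_left hX] at h1
      rw [hPhi] at h1
      have hdXR : (0:ℝ) < (r:ℝ) - (mrk M X : ℝ) := by
        have : ((mrk M X : ℕ):ℝ) < (r:ℝ) := by exact_mod_cast hXr
        linarith
      rw [div_le_div_iff₀ htR hdXR] at h1
      -- (k:ℝ) * ((r:ℝ) - mrk X) ≤ (ncard (E\X) : ℝ) * t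
      have h2 : (k : ℝ) * ((r:ℝ) - (mrk M X : ℝ)) ≤ ((M.E \ X).ncard : ℝ) * (t : ℝ) := h1
      have h3 : k * (r - mrk M X) ≤ (M.E \ X).ncard * t := by
        have hcast : ((k * (r - mrk M X) : ℕ) : ℝ) ≤ (((M.E \ X).ncard * t : ℕ) : ℝ) := by
          rw [Nat.cast_mul, Nat.cast_mul, Nat.cast_sub hXr.le]
          exact h2
        exact_mod_cast hcast
      have h4 : mrk M X ≤ r := hXr.le
      calc k * r = k * (r - mrk M X) + k * mrk M X := by
            rw [← Nat.mul_add]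
            congr 1
            omega
        _ ≤ (M.E \ X).ncard * t + k * mrk M X := by omega
        _ = k * mrk M X + t * (M.E \ X).ncard := by ring
    · push_neg at hXr
      have : k * r ≤ k * mrk M X := Nat.mul_le_mul_left _ hXr
      rw [← hr]
      omega
  obtain ⟨Bs, hBs, hBload⟩ := packing hE hcond
  refine ⟨k, Bs, hkpos, hBs, ?_⟩
  set L := sSup ((fun e => relLoad Bs e) '' M.E) with hL
  have himfin : ((fun e => relLoad Bs e) '' M.E).Finite := hE.image _
  have hEne : M.E.Nonempty := ground_nonempty_of_rk hE hrk
  have himne : ((fun e => relLoad Bs e) '' M.E).Nonempty := hEne.image _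
  -- upper bound : L ≤ t / k
  have hLle : L ≤ (t : ℝ) / (k : ℝ) := by
    refine csSup_le himne ?_
    rintro x ⟨e, -, rfl⟩
    show relLoad Bs e ≤ (t : ℝ) / (k : ℝ)
    rw [relLoad_eq]
    have hle : (loadF Bs e : ℝ) ≤ (t : ℝ) := by exact_mod_cast hBload e
    gcongr
  -- lower bound : 0 < L
  have hLpos : (0:ℝ) < L := by
    set i0 : Fin k := ⟨0, hkpos⟩ with hi0
    have hB0 : (Bs i0).ncard = r := base_ncard hE (hBs i0)
    have hB0ne : (Bs i0).Nonempty := by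
      rw [← Set.ncard_pos (hE.subset (hBs i0).subset_ground)]
      omega
    obtain ⟨e0, he0⟩ := hB0ne
    have hload1 : 1 ≤ loadF Bs e0 := by
      have : i0 ∈ Finset.univ.filter (fun i => e0 ∈ Bs i) :=
        Finset.mem_filter.2 ⟨Finset.mem_univ _, he0⟩
      have h2 : 0 < (Finset.univ.filter (fun i => e0 ∈ Bs i)).card := Finset.card_pos.2 ⟨i0, this⟩
      simpa [loadF] using h2
    have hrel0 : (0:ℝ) < relLoad Bs e0 := by
      rw [relLoad_eq]
      apply div_pos ?_ hkR
      exact_mod_cast hload1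
    exact lt_of_lt_of_le hrel0 (le_csSup himfin.bddAbove ⟨e0, (hBs i0).subset_ground he0, rfl⟩)
  have h2 := part2 hE hrk Bs hkpos hBs
  have h3 : (k:ℝ)/(t:ℝ) ≤ 1 / L := by
    have := one_div_le_one_div_of_le hLpos hLle
    rwa [one_div_div] at this
  rw [hPhi]
  rw [hPhi] at h2
  exact le_antisymm h2 h3

end Aux

/-- The maximum over base collections of the reciprocal of the maximum relative load
exists and equals `Φ_M`. -/
theorem stmt_3 (M : Matroid α) (hfin : M.E.Finite) (hrk : 1 ≤ mrk M M.E) :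
    (∃ (k : ℕ) (Bs : Fin k → Set α), 0 < k ∧ (∀ i, M.IsBase (Bs i)) ∧
      1 / sSup ((fun e => relLoad Bs e) '' M.E) = PhiM M) ∧
    (∀ (k : ℕ) (Bs : Fin k → Set α), 0 < k → (∀ i, M.IsBase (Bs i)) →
      1 / sSup ((fun e => relLoad Bs e) '' M.E) ≤ PhiM M) :=
  ⟨Aux.part1 hfin hrk, fun _k Bs hk hBs => Aux.part2 hfin hrk Bs hk hBs⟩
end

section
/- Let M be a matroid on a finite ground set E with rk(E) ≥ 1, and let A₀ ⊆ E attain Φ_M. Then for every subset A₁ ⊆ E\A₀ with rk(E\A₀) − rk((E\A₀)\A₁) ≥ 1, we have |A₁| / (rk(E\A₀) − rk((E\A₀)\A₁)) ≥ Φ_M. In particular, if rk(E\A₀) ≥ 1, then the fractional packing number of the restriction M|(E\A₀) satisfies Φ_{M|(E\A₀)} ≥ Φ_M. -/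
open Set Matroid

variable {α : Type*}

lemma mrk_nonempty (M : Matroid α) (A : Set α) :
    {n : ℕ | ∃ I, M.Indep I ∧ I ⊆ A ∧ I.ncard = n}.Nonempty :=
  ⟨0, ∅, M.empty_indep, empty_subset _, ncard_empty _⟩

lemma mrk_bddAbove (M : Matroid α) (hfin : M.E.Finite) (A : Set α) :
    BddAbove {n : ℕ | ∃ I, M.Indep I ∧ I ⊆ A ∧ I.ncard = n} := by
  refine ⟨M.E.ncard, ?_⟩
  rintro n ⟨I, hI, -, rfl⟩
  exact ncard_le_ncard hI.subset_ground hfin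

lemma mrk_mono (M : Matroid α) (hfin : M.E.Finite) {A B : Set α} (h : A ⊆ B) :
    mrk M A ≤ mrk M B :=
  csSup_le_csSup (mrk_bddAbove M hfin B) (mrk_nonempty M A)
    (by rintro n ⟨I, hI, hIA, rfl⟩; exact ⟨I, hI, hIA.trans h, rfl⟩)

lemma mrk_empty (M : Matroid α) : mrk M (∅ : Set α) = 0 := by
  have : {n : ℕ | ∃ I, M.Indep I ∧ I ⊆ (∅ : Set α) ∧ I.ncard = n} = {0} := by
    ext n
    constructor
    · rintro ⟨I, -, hI, rfl⟩
      simp [subset_empty_iff.mp hI]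
    · rintro rfl
      exact ⟨∅, M.empty_indep, Subset.rfl, ncard_empty _⟩
  rw [mrk, this, csSup_singleton]

lemma mrk_restrict (M : Matroid α) {X A : Set α} (h : A ⊆ X) :
    mrk (M ↾ X) A = mrk M A := by
  unfold mrk
  congr 1
  ext n
  constructor
  · rintro ⟨I, hI, hIA, rfl⟩
    exact ⟨I, (restrict_indep_iff.mp hI).1, hIA, rfl⟩
  · rintro ⟨I, hI, hIA, rfl⟩
    exact ⟨I, restrict_indep_iff.mpr ⟨hI, hIA.trans h⟩, hIA, rfl⟩

lemma phi_bddBelow (M : Matroid α) :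
    BddBelow {x : ℝ | ∃ A ⊆ M.E, mrk M (M.E \ A) < mrk M M.E ∧
      x = (A.ncard : ℝ) / ((mrk M M.E : ℝ) - (mrk M (M.E \ A) : ℝ))} := by
  refine ⟨0, ?_⟩
  rintro x ⟨A, -, hlt, rfl⟩
  have : (0 : ℝ) < (mrk M M.E : ℝ) - (mrk M (M.E \ A) : ℝ) := by
    have := Nat.cast_lt (α := ℝ) |>.mpr hlt
    linarith
  positivity


/-- If `A₀` attains `Φ_M`, then every candidate set in the restriction to `E \ A₀` has
partition value at least `Φ_M`; in particular the packing number of the restriction is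
at least `Φ_M`. -/
theorem stmt_5 (M : Matroid α) (hfin : M.E.Finite) (hrk : 1 ≤ mrk M M.E)
    (A₀ : Set α) (hA₀ : AttainsPhi M A₀) :
    (∀ A₁ ⊆ M.E \ A₀, mrk M ((M.E \ A₀) \ A₁) < mrk M (M.E \ A₀) →
      PhiM M ≤ (A₁.ncard : ℝ) /
        ((mrk M (M.E \ A₀) : ℝ) - (mrk M ((M.E \ A₀) \ A₁) : ℝ))) ∧
    (1 ≤ mrk M (M.E \ A₀) → PhiM M ≤ PhiM (M ↾ (M.E \ A₀))) := by

  obtain ⟨hA₀E, hlt₀, hval⟩ := hA₀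
  have hpart1 : ∀ A₁ ⊆ M.E \ A₀, mrk M ((M.E \ A₀) \ A₁) < mrk M (M.E \ A₀) →
      PhiM M ≤ (A₁.ncard : ℝ) /
        ((mrk M (M.E \ A₀) : ℝ) - (mrk M ((M.E \ A₀) \ A₁) : ℝ)) := by
    intro A₁ hA₁ hlt₁
    set r : ℕ := mrk M M.E with hr
    set r0 : ℕ := mrk M (M.E \ A₀) with hr0
    set r1 : ℕ := mrk M ((M.E \ A₀) \ A₁) with hr1
    have hdiff : M.E \ (A₀ ∪ A₁) = (M.E \ A₀) \ A₁ := by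
      rw [diff_diff]
    have hmem : ((A₀ ∪ A₁).ncard : ℝ) / ((r : ℝ) - (r1 : ℝ)) ∈
        {x : ℝ | ∃ A ⊆ M.E, mrk M (M.E \ A) < mrk M M.E ∧
          x = (A.ncard : ℝ) / ((mrk M M.E : ℝ) - (mrk M (M.E \ A) : ℝ))} := by
      refine ⟨A₀ ∪ A₁, union_subset hA₀E (hA₁.trans diff_subset), ?_, by rw [hdiff]⟩
      rw [hdiff]
      exact lt_trans hlt₁ hlt₀
    have hΦle : PhiM M ≤ ((A₀ ∪ A₁).ncard : ℝ) / ((r : ℝ) - (r1 : ℝ)) :=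
      csInf_le (phi_bddBelow M) hmem
    have hdisj : Disjoint A₀ A₁ := by
      rw [disjoint_left]
      intro e he he'
      exact (hA₁ he').2 he
    have hA₀fin : A₀.Finite := hfin.subset hA₀E
    have hA₁fin : A₁.Finite := hfin.subset (hA₁.trans diff_subset)
    have hcard : (A₀ ∪ A₁).ncard = A₀.ncard + A₁.ncard :=
      ncard_union_eq hdisj hA₀fin hA₁fin
    have h01 : (r1 : ℝ) < (r0 : ℝ) := Nat.cast_lt.mpr hlt₁
    have h0r : (r0 : ℝ) < (r : ℝ) := Nat.cast_lt.mpr hlt₀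
    have hd0 : (0 : ℝ) < (r : ℝ) - r0 := by linarith
    have hd1 : (0 : ℝ) < (r0 : ℝ) - r1 := by linarith
    have ha : (A₀.ncard : ℝ) = PhiM M * ((r : ℝ) - r0) := by
      rw [← hval]; field_simp
    rw [hcard] at hΦle
    rw [le_div_iff₀ hd1]
    rw [le_div_iff₀ (by linarith : (0:ℝ) < (r:ℝ) - r1)] at hΦle
    push_cast at hΦle ⊢
    nlinarith [hΦle, ha]
  refine ⟨hpart1, ?_⟩
  intro hrk0
  set X : Set α := M.E \ A₀ with hX
  have hgr : (M ↾ X).E = X := rfl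
  conv_rhs => rw [PhiM, hgr]
  refine le_csInf ?_ ?_
  · refine ⟨(X.ncard : ℝ) / ((mrk (M ↾ X) X : ℝ) - (mrk (M ↾ X) (X \ X) : ℝ)),
      X, Subset.rfl, ?_, rfl⟩
    rw [diff_self, mrk_restrict M (empty_subset X), mrk_empty, mrk_restrict M Subset.rfl]
    exact hrk0
  · rintro x ⟨A, hAX, hltA, rfl⟩
    rw [mrk_restrict M Subset.rfl, mrk_restrict M diff_subset] at hltA ⊢
    exact hpart1 A hAX hltA
end

section
/- Let M be a matroid on a finite ground set E with rk(E) ≥ 1, let B* be a base collection of M satisfying 1 / (max_{e∈E} ℓ^{B*}(e)) = Φ_M, and let A₀ ⊆ E attain Φ_M. Then ℓ^{B*}(e) = 1/Φ_M for every e ∈ A₀, and every base B occurring in B* satisfies |B ∩ A₀| = rk(E) − rk(E\A₀). -/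
open Set Matroid

variable {α : Type*}

private lemma le_mrk_aux (M : Matroid α) (hfin : M.E.Finite) {I A : Set α}
    (hI : M.Indep I) (hIA : I ⊆ A) (hA : A ⊆ M.E) : I.ncard ≤ mrk M A := by
  refine le_csSup ⟨A.ncard, ?_⟩ ⟨I, hI, hIA, rfl⟩
  rintro n ⟨J, hJ, hJA, rfl⟩
  exact Set.ncard_le_ncard hJA (hfin.subset hA)

private lemma mrk_eq_base (M : Matroid α) (hfin : M.E.Finite) {B : Set α}
    (hB : M.IsBase B) : mrk M M.E = B.ncard := by
  refine le_antisymm (csSup_le ⟨B.ncard, B, hB.indep, hB.subset_ground, rfl⟩ ?_)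
    (le_mrk_aux M hfin hB.indep hB.subset_ground subset_rfl)
  rintro n ⟨I, hI, hIE, rfl⟩
  obtain ⟨B', hB', hIB'⟩ := hI.exists_isBase_superset
  calc I.ncard ≤ B'.ncard := Set.ncard_le_ncard hIB' (hfin.subset hB'.subset_ground)
    _ = B.ncard := hB'.ncard_eq_ncard_of_isBase hB

/-- If a base collection achieves `1 / max ℓ = Φ_M` and `A₀` attains `Φ_M`, then all
elements of `A₀` have relative load exactly `1/Φ_M` and every base in the collection meets
`A₀` in exactly `rk(E) − rk(E \ A₀)` elements. -/
theorem stmt_11 (M : Matroid α) (hfin : M.E.Finite) (hrk : 1 ≤ mrk M M.E)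
    (k : ℕ) (hk : 0 < k) (Bs : Fin k → Set α) (hBs : ∀ i, M.IsBase (Bs i))
    (hopt : 1 / sSup ((fun e => relLoad Bs e) '' M.E) = PhiM M)
    (A₀ : Set α) (hA₀ : AttainsPhi M A₀) :
    (∀ e ∈ A₀, relLoad Bs e = 1 / PhiM M) ∧
    (∀ i, ((Bs i ∩ A₀).ncard : ℤ) = (mrk M M.E : ℤ) - (mrk M (M.E \ A₀) : ℤ)) := by
  classical
  obtain ⟨hA₀E, hlt, hPhi⟩ := hA₀
  have hA₀fin : A₀.Finite := hfin.subset hA₀E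
  have hA₀ne : A₀.Nonempty := by
    rcases A₀.eq_empty_or_nonempty with h | h
    · rw [h, Set.diff_empty] at hlt; exact absurd hlt (lt_irrefl _)
    · exact h
  set r : ℕ := mrk M M.E
  set r' : ℕ := mrk M (M.E \ A₀)
  set n : ℕ := A₀.ncard with hn_def
  have hn : 0 < n := (Set.ncard_pos hA₀fin).mpr hA₀ne
  have hnR : (0 : ℝ) < n := by exact_mod_cast hn
  have hdpos : (0 : ℝ) < (r : ℝ) - (r' : ℝ) := by
    have : (r' : ℝ) < r := by exact_mod_cast hlt
    linarith
  have hPhipos : 0 < PhiM M := by rw [← hPhi]; positivity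
  have h1Phi : 1 / PhiM M = ((r : ℝ) - r') / n := by
    rw [← hPhi, one_div_div]
  -- the sup equals 1/Φ
  have hbdd : BddAbove ((fun e => relLoad Bs e) '' M.E) := (hfin.image _).bddAbove
  have hs_ne : sSup ((fun e => relLoad Bs e) '' M.E) ≠ 0 := by
    intro h; rw [h] at hopt; simp at hopt; exact absurd hopt.symm (ne_of_gt hPhipos)
  have hs : sSup ((fun e => relLoad Bs e) '' M.E) = 1 / PhiM M := by
    rw [← hopt, one_div_one_div]
  -- finset versions
  set A₀f : Finset α := hA₀fin.toFinset with hA₀f_def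
  have hA₀f_card : A₀f.card = n := (Set.ncard_eq_toFinset_card A₀ hA₀fin).symm
  set L : α → ℕ := fun e => (Finset.univ.filter (fun i => e ∈ Bs i)).card with hL_def
  set c : Fin k → ℕ := fun i => (A₀f.filter (fun e => e ∈ Bs i)).card with hc_def
  have hL : ∀ e, ({i | e ∈ Bs i} : Set (Fin k)).ncard = L e := by
    intro e
    rw [Set.ncard_eq_toFinset_card']
    simp [hL_def]
  have hrelLoad : ∀ e, relLoad Bs e = (L e : ℝ) / k := by
    intro e; rw [relLoad, hL]
  have hc : ∀ i, (Bs i ∩ A₀).ncard = c i := by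
    intro i
    have hset : Bs i ∩ A₀ = ↑(A₀f.filter (fun e => e ∈ Bs i)) := by
      ext e; simp [hA₀f_def, Set.Finite.mem_toFinset, and_comm]
    simp only [hc_def, hset, Set.ncard_coe_finset]
  have hdc : ∑ e ∈ A₀f, L e = ∑ i, c i := by
    simp only [hL_def, hc_def, Finset.card_filter]
    exact Finset.sum_comm
  have hdcR : ∑ e ∈ A₀f, (L e : ℝ) = ∑ i, (c i : ℝ) := by push_cast; exact_mod_cast hdc
  -- lower bound for c i
  have hci : ∀ i, (r : ℝ) - r' ≤ (c i : ℝ) := by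
    intro i
    have hBi := hBs i
    have hBfin : (Bs i).Finite := hfin.subset hBi.subset_ground
    have h1 : (Bs i ∩ A₀).ncard + (Bs i \ A₀).ncard = r := by
      rw [Set.ncard_inter_add_ncard_diff_eq_ncard _ _ hBfin]
      exact (mrk_eq_base M hfin hBi).symm
    have h2 : (Bs i \ A₀).ncard ≤ r' :=
      le_mrk_aux M hfin (hBi.indep.subset diff_subset)
        (diff_subset_diff_left hBi.subset_ground) diff_subset
    have h1' : ((Bs i ∩ A₀).ncard : ℝ) + ((Bs i \ A₀).ncard : ℝ) = r := by exact_mod_cast h1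
    have h2' : ((Bs i \ A₀).ncard : ℝ) ≤ r' := by exact_mod_cast h2
    rw [← hc i]
    linarith
  -- upper bound for L e
  have hle : ∀ e ∈ A₀f, (L e : ℝ) ≤ k * (((r : ℝ) - r') / n) := by
    intro e he
    have heA : e ∈ A₀ := by rwa [hA₀f_def, Set.Finite.mem_toFinset] at he
    have hmem : relLoad Bs e ∈ ((fun e => relLoad Bs e) '' M.E) := ⟨e, hA₀E heA, rfl⟩
    have := (le_csSup hbdd hmem).trans_eq (hs.trans h1Phi)
    rw [hrelLoad] at this
    have hkR : (0 : ℝ) < k := by exact_mod_cast hk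
    rw [div_le_iff₀ hkR] at this
    linarith [this]
  -- the two sums
  have hSge : (k : ℝ) * ((r : ℝ) - r') ≤ ∑ e ∈ A₀f, (L e : ℝ) := by
    have : ∑ i : Fin k, ((r : ℝ) - r') ≤ ∑ i, (c i : ℝ) := Finset.sum_le_sum fun i _ => hci i
    rw [Finset.sum_const, Finset.card_univ, Fintype.card_fin, nsmul_eq_mul] at this
    calc (k : ℝ) * ((r : ℝ) - r') ≤ ∑ i, (c i : ℝ) := this
      _ = ∑ e ∈ A₀f, (L e : ℝ) := hdcR.symm
  have hSle : ∑ e ∈ A₀f, (L e : ℝ) ≤ (k : ℝ) * ((r : ℝ) - r') := by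
    have : ∑ e ∈ A₀f, (L e : ℝ) ≤ ∑ e ∈ A₀f, (k : ℝ) * (((r : ℝ) - r') / n) :=
      Finset.sum_le_sum hle
    rw [Finset.sum_const, hA₀f_card, nsmul_eq_mul] at this
    calc ∑ e ∈ A₀f, (L e : ℝ) ≤ (n : ℝ) * ((k : ℝ) * (((r : ℝ) - r') / n)) := this
      _ = (k : ℝ) * ((r : ℝ) - r') := by field_simp
  have hS : ∑ e ∈ A₀f, (L e : ℝ) = (k : ℝ) * ((r : ℝ) - r') := le_antisymm hSle hSge
  constructor
  · -- all relative loads on A₀ equal 1/Φ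
    intro e heA
    have he : e ∈ A₀f := by rw [hA₀f_def, Set.Finite.mem_toFinset]; exact heA
    have hzero : ∑ e ∈ A₀f, ((k : ℝ) * (((r : ℝ) - r') / n) - (L e : ℝ)) = 0 := by
      rw [Finset.sum_sub_distrib, Finset.sum_const, hA₀f_card, nsmul_eq_mul, hS]
      field_simp
      ring
    have hnonneg : ∀ e ∈ A₀f, 0 ≤ (k : ℝ) * (((r : ℝ) - r') / n) - (L e : ℝ) :=
      fun e he => by linarith [hle e he]
    have heq := (Finset.sum_eq_zero_iff_of_nonneg hnonneg).mp hzero e he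
    have hLe : (L e : ℝ) = (k : ℝ) * (((r : ℝ) - r') / n) := by linarith
    rw [hrelLoad, hLe, h1Phi]
    have hkR : (k : ℝ) ≠ 0 := by positivity
    field_simp
  · -- all intersections have the right size
    intro i
    have hzero : ∑ i : Fin k, ((c i : ℝ) - ((r : ℝ) - r')) = 0 := by
      rw [Finset.sum_sub_distrib, Finset.sum_const, Finset.card_univ, Fintype.card_fin,
        nsmul_eq_mul]
      rw [← hdcR, hS]; ring
    have hnonneg : ∀ i ∈ Finset.univ, 0 ≤ (c i : ℝ) - ((r : ℝ) - r') :=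
      fun i _ => by linarith [hci i]
    have heq := (Finset.sum_eq_zero_iff_of_nonneg hnonneg).mp hzero i (Finset.mem_univ i)
    have : (c i : ℝ) = (r : ℝ) - r' := by linarith
    rw [hc i]
    exact_mod_cast this
end

section
/- Let M be a matroid on a finite ground set E, let w : E → ℝ be a weight function, let B be a minimum-weight base of M with respect to w, and let A ⊆ E. Then there exists a minimum-weight base B_A of the contraction M·A (with respect to w restricted to A) such that B_A ⊆ B ∩ A. -/
open Set Matroid

variable {α : Type*}

/-- Independence in the contraction `M·A`: `X ⊆ A` is independent iff `X ∪ B₀` is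
independent in `M` for some base `B₀` of the restriction `M|(E \ A)`. -/
def ConIndep (M : Matroid α) (A X : Set α) : Prop :=
  X ⊆ A ∧ ∃ B₀, (M ↾ (M.E \ A)).IsBase B₀ ∧ M.Indep (X ∪ B₀)

/-- A base of the contraction `M·A`: a maximal `ConIndep` set. -/
def ConBase (M : Matroid α) (A B : Set α) : Prop :=
  Maximal (ConIndep M A) B

section Aux

variable {M : Matroid α} {A B B₁ B₂ D D' : Set α} {e f : α} {w : α → ℝ}

lemma wSum_exchange (hfin : B.Finite) (he : e ∈ B) (hf : f ∉ B) :
    wSum w (insert f (B \ {e})) = wSum w B - w e + w f := by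
  have h1 : f ∉ B \ {e} := fun h => hf h.1
  have h3 : wSum w (insert f (B \ {e})) = w f + wSum w (B \ {e}) :=
    finsum_mem_insert' w h1 (hfin.diff.inter_of_left _)
  have h4 : wSum w B = w e + wSum w (B \ {e}) := by
    conv_lhs => rw [show B = insert e (B \ {e}) by simp [he]]
    exact finsum_mem_insert' w (fun h => h.2 rfl) (hfin.diff.inter_of_left _)
  rw [h3, h4]; ring

lemma strong_exchange (hE : M.E.Finite) (hB₁ : M.IsBase B₁) (hB₂ : M.IsBase B₂)
    (he : e ∈ B₁ \ B₂) :
    ∃ f ∈ B₂ \ B₁, M.IsBase (insert f (B₁ \ {e})) ∧ M.IsBase (insert e (B₂ \ {f})) := by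
  have heE : e ∈ M.E := hB₁.subset_ground he.1
  have hB₂fin : B₂.Finite := hE.subset hB₂.subset_ground
  have hTfin : ({J | J ⊆ B₂ ∧ e ∈ M.closure J}).Finite :=
    hB₂fin.finite_subsets.subset (fun J hJ => hJ.1)
  have hTne : ({J | J ⊆ B₂ ∧ e ∈ M.closure J}).Nonempty :=
    ⟨B₂, Subset.rfl, by rw [hB₂.closure_eq]; exact heE⟩
  obtain ⟨J, hJmem, hJmin⟩ : ∃ J ∈ {J | J ⊆ B₂ ∧ e ∈ M.closure J},
      ∀ J' ∈ {J | J ⊆ B₂ ∧ e ∈ M.closure J}, id J' ≤ id J → id J = id J' := by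
    obtain ⟨J, hJ⟩ := hTfin.exists_minimal hTne
    exact ⟨J, hJ.1, fun J' h1 h2 => (hJ.2 h1 h2).antisymm h2⟩
  have key1 : ∀ g ∈ J, e ∉ M.closure (J \ {g}) := by
    intro g hg hcl
    have hmem : J \ {g} ∈ {J | J ⊆ B₂ ∧ e ∈ M.closure J} :=
      ⟨diff_subset.trans hJmem.1, hcl⟩
    have := hJmin _ hmem diff_subset
    simp only [id] at this
    exact (this ▸ hg).2 rfl
  have key2 : ∀ g ∈ J, e ∉ M.closure (B₂ \ {g}) := by
    intro g hg hcl
    have hJf : e ∈ M.closure (insert g (J \ {g})) \ M.closure (J \ {g}) := by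
      rw [insert_diff_singleton, insert_eq_of_mem hg]
      exact ⟨hJmem.2, key1 g hg⟩
    have hfx := Matroid.closure_exchange hJf
    have hsub : insert e (J \ {g}) ⊆ M.closure (B₂ \ {g}) := by
      refine insert_subset hcl ?_
      exact (diff_subset_diff_left hJmem.1).trans
        (M.subset_closure _ (diff_subset.trans hB₂.subset_ground))
    exact hB₂.indep.notMem_closure_diff_of_mem (hJmem.1 hg)
      (M.closure_subset_closure_of_subset_closure hsub hfx.1)
  have hnot : ¬ J ⊆ M.closure (B₁ \ {e}) := fun hJc =>
    hB₁.indep.notMem_closure_diff_of_mem he.1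
      (M.closure_subset_closure_of_subset_closure hJc hJmem.2)
  obtain ⟨f, hfJ, hfcl⟩ := not_subset.mp hnot
  have hfB₂ : f ∈ B₂ := hJmem.1 hfJ
  have hfe : f ≠ e := fun h => he.2 (h ▸ hfB₂)
  have hfB₁ : f ∉ B₁ := fun h =>
    hfcl (M.subset_closure _ (diff_subset.trans hB₁.subset_ground) ⟨h, hfe⟩)
  have hI₁ : M.Indep (insert f (B₁ \ {e})) := by
    rw [(hB₁.indep.subset diff_subset).insert_indep_iff_of_notMem (fun h => hfB₁ h.1)]
    exact ⟨hB₂.subset_ground hfB₂, hfcl⟩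
  have hI₂ : M.Indep (insert e (B₂ \ {f})) := by
    rw [(hB₂.indep.subset diff_subset).insert_indep_iff_of_notMem (fun h => he.2 h.1)]
    exact ⟨heE, key2 f hfJ⟩
  exact ⟨f, ⟨hfB₂, hfB₁⟩, hB₁.exchange_isBase_of_indep hfB₁ hI₁,
    hB₂.exchange_isBase_of_indep he.2 hI₂⟩

lemma conBase_of_base (hE : M.E.Finite) (hA : A ⊆ M.E) (hD : D ⊆ A) {B₀ : Set α}
    (hB₀ : (M ↾ (M.E \ A)).IsBase B₀) (hbase : M.IsBase (D ∪ B₀)) :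
    ConBase M A D := by
  have hB₀b : M.IsBasis B₀ (M.E \ A) := (isBase_restrict_iff diff_subset).1 hB₀
  have hB₀fin : B₀.Finite := hE.subset (hB₀b.subset.trans diff_subset)
  constructor
  · exact ⟨hD, B₀, hB₀, hbase.indep⟩
  · rintro D' ⟨hD'A, B₀', hB₀', hind⟩ hDD'
    have hB₀'b : M.IsBasis B₀' (M.E \ A) := (isBase_restrict_iff diff_subset).1 hB₀'
    have hD'fin : D'.Finite := (hE.subset hA).subset hD'A
    have hB₀'fin : B₀'.Finite := hE.subset (hB₀'b.subset.trans diff_subset)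
    have hdisj : Disjoint D' B₀' :=
      (disjoint_sdiff_right (s := A) (t := M.E)).mono hD'A hB₀'b.subset
    have hdisj2 : Disjoint D B₀ :=
      (disjoint_sdiff_right (s := A) (t := M.E)).mono hD hB₀b.subset
    obtain ⟨B₂, hB₂, hsub⟩ := hind.exists_isBase_superset
    have hcard : (D' ∪ B₀').ncard ≤ (D ∪ B₀).ncard := by
      rw [hbase.ncard_eq_ncard_of_isBase hB₂]
      exact ncard_le_ncard hsub (hE.subset hB₂.subset_ground)
    rw [ncard_union_eq hdisj hD'fin hB₀'fin, ncard_union_eq hdisj2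
      ((hE.subset hA).subset hD) hB₀fin] at hcard
    have hcard2 : B₀'.ncard = B₀.ncard := by
      rw [hB₀'.ncard_eq_ncard_of_isBase hB₀]
    have hD'le : D'.ncard ≤ D.ncard := by omega
    exact (eq_of_subset_of_ncard_le hDD' hD'le hD'fin).symm.subset

lemma ConBase.exists_base' (hA : A ⊆ M.E) (h : ConBase M A D) :
    ∃ B₀, (M ↾ (M.E \ A)).IsBase B₀ ∧ M.IsBase (D ∪ B₀) := by
  obtain ⟨⟨hDA, B₀, hB₀, hind⟩, hmax⟩ := h
  have hB₀b : M.IsBasis B₀ (M.E \ A) := (isBase_restrict_iff diff_subset).1 hB₀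
  obtain ⟨B₁, hB₁, hsub⟩ := hind.exists_isBase_superset
  have hB₁S : B₁ ∩ (M.E \ A) = B₀ :=
    hB₀b.inter_eq_of_subset_indep (subset_union_right.trans hsub) hB₁.indep
  have hsplit : B₁ = (B₁ ∩ A) ∪ B₀ := by
    rw [← hB₁S]
    ext x
    constructor
    · intro hx
      by_cases hxA : x ∈ A
      · exact Or.inl ⟨hx, hxA⟩
      · exact Or.inr ⟨hx, hB₁.subset_ground hx, hxA⟩
    · rintro (h | h) <;> exact h.1
  have hCI : ConIndep M A (B₁ ∩ A) :=
    ⟨inter_subset_right, B₀, hB₀, by rw [← hsplit]; exact hB₁.indep⟩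
  have hDsub : D ⊆ B₁ ∩ A := subset_inter (subset_union_left.trans hsub) hDA
  have hEq : B₁ ∩ A = D := (hmax hCI hDsub).antisymm hDsub
  refine ⟨B₀, hB₀, ?_⟩
  rw [← hEq, ← hsplit]
  exact hB₁

lemma ConBase.base_union (hE : M.E.Finite) (hA : A ⊆ M.E) (h : ConBase M A D)
    {B₀ : Set α} (hB₀ : (M ↾ (M.E \ A)).IsBase B₀) : M.IsBase (D ∪ B₀) := by
  obtain ⟨B₀', hB₀', hbase⟩ := h.exists_base' hA
  have hDA : D ⊆ A := h.1.1
  have hB₀b : M.IsBasis B₀ (M.E \ A) := (isBase_restrict_iff diff_subset).1 hB₀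
  have hB₀'b : M.IsBasis B₀' (M.E \ A) := (isBase_restrict_iff diff_subset).1 hB₀'
  obtain ⟨B₂, hB₂, hB₀B₂, hsub⟩ := hB₀b.indep.exists_isBase_subset_union_isBase hbase
  have h1 : B₂ ∩ (M.E \ A) = B₀ := hB₀b.inter_eq_of_subset_indep hB₀B₂ hB₂.indep
  have h2 : B₂ ⊆ D ∪ B₀ := by
    intro x hx
    rcases hsub hx with h' | h'
    · exact Or.inr (h1 ▸ ⟨hx, hB₀b.subset h'⟩)
    · rcases h' with h'' | h''
      · exact Or.inl h''
      · exact Or.inr (h1 ▸ ⟨hx, hB₀'b.subset h''⟩)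
  have hdisj : Disjoint D B₀ :=
    (disjoint_sdiff_right (s := A) (t := M.E)).mono hDA hB₀b.subset
  have hdisj' : Disjoint D B₀' :=
    (disjoint_sdiff_right (s := A) (t := M.E)).mono hDA hB₀'b.subset
  have hDfin : D.Finite := (hE.subset hA).subset hDA
  have hB₀fin : B₀.Finite := hE.subset (hB₀b.subset.trans diff_subset)
  have hB₀'fin : B₀'.Finite := hE.subset (hB₀'b.subset.trans diff_subset)
  have hcard : (D ∪ B₀).ncard ≤ B₂.ncard := by
    rw [hB₂.ncard_eq_ncard_of_isBase hbase, ncard_union_eq hdisj hDfin hB₀fin,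
      ncard_union_eq hdisj' hDfin hB₀'fin, hB₀.ncard_eq_ncard_of_isBase hB₀']
  rw [← eq_of_subset_of_ncard_le h2 hcard ((hDfin.union hB₀fin))]
  exact hB₂

end Aux

/-- For any minimum-weight base `B` of `M` and any `A ⊆ E` there is a minimum-weight base
`B_A` of the contraction `M·A` contained in `B ∩ A`. -/
theorem stmt_15 (M : Matroid α) (hfin : M.E.Finite) (w : α → ℝ)
    (B : Set α) (hB : IsMinWeightBase M w B) (A : Set α) (hA : A ⊆ M.E) :
    ∃ BA, ConBase M A BA ∧ (∀ B', ConBase M A B' → wSum w BA ≤ wSum w B') ∧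
      BA ⊆ B ∩ A := by
  classical
  obtain ⟨hBbase, hBmin⟩ := hB
  have hBfin : B.Finite := hfin.subset hBbase.subset_ground
  have hAfin : A.Finite := hfin.subset hA
  have hBA : B \ A ⊆ M.E \ A := diff_subset_diff_left hBbase.subset_ground
  obtain ⟨B₀, hB₀basis, hBAB₀⟩ :=
    (hBbase.indep.subset diff_subset).subset_isBasis_of_subset hBA diff_subset
  have hB₀ : (M ↾ (M.E \ A)).IsBase B₀ := hB₀basis.restrict_isBase
  -- a ConBase exists
  obtain ⟨B₁, hB₁, hB₀B₁⟩ := hB₀basis.indep.exists_isBase_superset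
  have h1 : B₁ ∩ (M.E \ A) = B₀ := hB₀basis.inter_eq_of_subset_indep hB₀B₁ hB₁.indep
  have hsplit : B₁ = (B₁ ∩ A) ∪ B₀ := by
    rw [← h1]
    ext x
    constructor
    · intro hx
      by_cases hxA : x ∈ A
      · exact Or.inl ⟨hx, hxA⟩
      · exact Or.inr ⟨hx, hB₁.subset_ground hx, hxA⟩
    · rintro (h | h) <;> exact h.1
  have hCB₁ : ConBase M A (B₁ ∩ A) :=
    conBase_of_base hfin hA inter_subset_right hB₀ (by rw [← hsplit]; exact hB₁)
  set F := {D | ConBase M A D} with hF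
  have hFfin : F.Finite := hAfin.finite_subsets.subset (fun D hD => hD.1.1)
  have hFne : F.Nonempty := ⟨B₁ ∩ A, hCB₁⟩
  obtain ⟨D₀, hD₀F, hD₀min⟩ := Set.exists_min_image F (wSum w) hFfin hFne
  have hF'fin : ({D ∈ F | wSum w D ≤ wSum w D₀}).Finite := hFfin.subset (sep_subset _ _)
  obtain ⟨BA, hBAmem, hBAmax⟩ := Set.exists_max_image {D ∈ F | wSum w D ≤ wSum w D₀}
      (fun D => (D ∩ B).ncard) hF'fin ⟨D₀, hD₀F, le_rfl⟩
  have hBAF : ConBase M A BA := hBAmem.1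
  have hBAA : BA ⊆ A := hBAF.1.1
  have hBAfin : BA.Finite := hAfin.subset hBAA
  refine ⟨BA, hBAF, fun D' hD' => hBAmem.2.trans (hD₀min D' hD'), ?_⟩
  intro e heBA
  refine ⟨?_, hBAA heBA⟩
  by_contra heB
  have hstar : M.IsBase (BA ∪ B₀) := hBAF.base_union hfin hA hB₀
  obtain ⟨f, hf, hb1, hb2⟩ := strong_exchange hfin hstar hBbase ⟨Or.inl heBA, heB⟩
  have hfB : f ∈ B := hf.1
  have hfA : f ∈ A := by
    by_contra hfA
    exact hf.2 (Or.inr (hBAB₀ ⟨hfB, hfA⟩))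
  have hfBA : f ∉ BA := fun h => hf.2 (Or.inl h)
  have hwfe : w f ≤ w e := by
    have hle := hBmin _ hb2
    rw [wSum_exchange hBfin hfB heB] at hle
    linarith
  have heB₀ : e ∉ B₀ := fun h => (hB₀basis.subset h).2 (hBAA heBA)
  have hfB₀ : f ∉ B₀ := fun h => hf.2 (Or.inr h)
  have hrw : insert f ((BA ∪ B₀) \ {e}) = (insert f (BA \ {e})) ∪ B₀ := by
    rw [union_diff_distrib, diff_singleton_eq_self heB₀, insert_union]
  rw [hrw] at hb1
  have hD' : ConBase M A (insert f (BA \ {e})) :=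
    conBase_of_base hfin hA (insert_subset hfA (diff_subset.trans hBAA)) hB₀ hb1
  have hwD' : wSum w (insert f (BA \ {e})) = wSum w BA - w e + w f :=
    wSum_exchange hBAfin heBA hfBA
  have hD'F' : insert f (BA \ {e}) ∈ {D ∈ F | wSum w D ≤ wSum w D₀} := by
    refine ⟨hD', ?_⟩
    rw [hwD']
    have := hBAmem.2
    linarith
  have hcard := hBAmax _ hD'F'
  have hEq : insert f (BA \ {e}) ∩ B = insert f (BA ∩ B) := by
    ext x
    simp only [mem_inter_iff, mem_insert_iff, mem_diff, mem_singleton_iff]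
    constructor
    · rintro ⟨(rfl | ⟨h1', _⟩), h2⟩
      · exact Or.inl rfl
      · exact Or.inr ⟨h1', h2⟩
    · rintro (rfl | ⟨h1', h2⟩)
      · exact ⟨Or.inl rfl, hfB⟩
      · exact ⟨Or.inr ⟨h1', fun hxe => heB (hxe ▸ h2)⟩, h2⟩
  rw [hEq, ncard_insert_of_notMem (fun h => hfBA h.1) (hBAfin.inter_of_left B)] at hcard
  omega
end

section
/- Let M be a matroid on a finite ground set E, let A ⊆ E, and let w : E → ℝ be a weight function such that w(a) < w(b) for every a ∈ A and every b ∈ E\A. Then for every minimum-weight base B of M with respect to w, the set B ∩ A is a base of the restriction M|A. -/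
open Set Matroid

variable {α : Type*}

/-- If all elements of `A` are lighter than all elements of `E \ A`, then every
minimum-weight base of `M` meets `A` in a base of the restriction `M|A`. -/
theorem stmt_16 (M : Matroid α) (hfin : M.E.Finite) (A : Set α) (hA : A ⊆ M.E)
    (w : α → ℝ) (hw : ∀ a ∈ A, ∀ b ∈ M.E \ A, w a < w b)
    (B : Set α) (hB : IsMinWeightBase M w B) :
    (M ↾ A).IsBase (B ∩ A) := by
  obtain ⟨hBbase, hBmin⟩ := hB
  have hBE : B ⊆ M.E := hBbase.subset_ground
  have hBfin : B.Finite := hfin.subset hBE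
  rw [Matroid.isBase_restrict_iff hA]
  refine (hBbase.indep.inter_right A).isBasis_of_forall_insert inter_subset_right ?_
  rintro e ⟨heA, heBA⟩
  have heB : e ∉ B := fun h => heBA ⟨h, heA⟩
  by_contra hdep
  rw [M.not_dep_iff (insert_subset (hA heA) ((inter_subset_left.trans hBE)))] at hdep
  obtain ⟨B', hB'base, hsub, hsub'⟩ := hdep.exists_isBase_subset_union_isBase hBbase
  have heB' : e ∈ B' := hsub (mem_insert _ _)
  have hBA : B ∩ A ⊆ B' := (subset_insert _ _).trans hsub
  have hB'fin : B'.Finite := hfin.subset hB'base.subset_ground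
  have hB'sub : B' ⊆ insert e B := by
    refine hsub'.trans ?_
    rw [insert_union]
    exact insert_subset_insert (union_subset inter_subset_left Subset.rfl)
  have hcard : B'.encard = B.encard := hB'base.encard_eq_encard_of_isBase hBbase
  have hB'eq : B' = insert e (B' ∩ B) := by
    apply subset_antisymm
    · intro x hx
      rcases hB'sub hx with h | h
      · exact h ▸ mem_insert _ _
      · exact mem_insert_of_mem _ ⟨hx, h⟩
    · exact insert_subset heB' inter_subset_left
  have heBB : e ∉ B' ∩ B := fun h => heB h.2
  have henc : (B \ B').encard = 1 := by
    have h1 : B'.encard = (B' ∩ B).encard + 1 := by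
      conv_lhs => rw [hB'eq]
      rw [encard_insert_of_notMem heBB, add_comm]
    have h2 : (B \ B').encard + (B ∩ B').encard = B.encard :=
      encard_diff_add_encard_inter B B'
    rw [inter_comm B B', ← hcard, h1] at h2
    have hfin2 : (B' ∩ B).encard ≠ ⊤ := (hBfin.inter_of_right _).encard_lt_top.ne
    exact WithTop.add_right_cancel hfin2 (h2.trans (add_comm _ _))
  obtain ⟨y, hy⟩ := encard_eq_one.mp henc
  have hymem : y ∈ B \ B' := by rw [hy]; exact rfl
  have hyB : y ∈ B := hymem.1
  have hyB' : y ∉ B' := hymem.2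
  have hyA : y ∉ A := fun h => hyB' (hBA ⟨hyB, h⟩)
  have hwlt : w e < w y := hw e heA y ⟨hBE hyB, hyA⟩
  have hwB' : wSum w B' = w e + wSum w (B' ∩ B) := by
    calc wSum w B' = wSum w (insert e (B' ∩ B)) := by rw [← hB'eq]
    _ = w e + wSum w (B' ∩ B) := finsum_mem_insert w heBB (hB'fin.inter_of_left _)
  have hdisj : Disjoint (B \ B') (B' ∩ B) := by
    rw [Set.disjoint_left]
    rintro x ⟨_, hx⟩ ⟨hx', _⟩
    exact hx hx'
  have hBdecomp : B = (B \ B') ∪ (B' ∩ B) := by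
    rw [inter_comm]
    exact (diff_union_inter B B').symm
  have hwB : wSum w B = w y + wSum w (B' ∩ B) := by
    calc wSum w B = wSum w ((B \ B') ∪ (B' ∩ B)) := by rw [← hBdecomp]
    _ = wSum w (B \ B') + wSum w (B' ∩ B) :=
        finsum_mem_union hdisj (hBfin.diff (t := B')) (hBfin.inter_of_right _)
    _ = w y + wSum w (B' ∩ B) := by
        rw [hy]
        simp [wSum, finsum_mem_singleton]
  have : wSum w B' < wSum w B := by rw [hwB', hwB]; linarith
  exact absurd (hBmin B' hB'base) (not_le.mpr this)
end

section
/- Let M be a matroid on a finite ground set E, let A ⊆ E, and let w : E → ℝ be a weight function such that w(b) < w(a) for every b ∈ E\A and every a ∈ A. Then for every minimum-weight base B of M with respect to w, the set B ∩ A is a base of the contraction M·A (and B ∩ (E\A) is a base of the restriction M|(E\A)). -/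
open Set Matroid

variable {α : Type*}

/-- If all elements of `E \ A` are lighter than all elements of `A`, then every
minimum-weight base `B` of `M` meets `A` in a base of the contraction `M·A`, and meets
`E \ A` in a base of the restriction `M|(E \ A)`. -/
theorem stmt_17 (M : Matroid α) (hfin : M.E.Finite) (A : Set α) (hA : A ⊆ M.E)
    (w : α → ℝ) (hw : ∀ b ∈ M.E \ A, ∀ a ∈ A, w b < w a)
    (B : Set α) (hB : IsMinWeightBase M w B) :
    ConBase M A (B ∩ A) ∧ (M ↾ (M.E \ A)).IsBase (B ∩ (M.E \ A)) := by
  classical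
  set D := M.E \ A with hD
  have hBbase := hB.1
  have hBE : B ⊆ M.E := hBbase.subset_ground
  have hBfin : B.Finite := hfin.subset hBE
  -- Step 1: B ∩ D is a base of M ↾ D
  have hIr : (M ↾ D).Indep (B ∩ D) :=
    restrict_indep_iff.mpr ⟨hBbase.indep.subset inter_subset_left, inter_subset_right⟩
  obtain ⟨B₀, hB₀, hIB₀⟩ := hIr.exists_isBase_superset
  have hB₀D : B₀ ⊆ D := by
    have := hB₀.subset_ground
    rwa [restrict_ground_eq] at this
  have hB₀indep : M.Indep B₀ := (restrict_indep_iff.mp hB₀.indep).1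
  have hstep1 : (M ↾ D).IsBase (B ∩ D) := by
    have hsub : B₀ ⊆ B ∩ D := by
      intro e heB₀
      by_contra heI
      have heD : e ∈ D := hB₀D heB₀
      have heB : e ∉ B := fun h => heI ⟨h, heD⟩
      have hins : M.Indep (insert e (B ∩ D)) :=
        hB₀indep.subset (insert_subset heB₀ hIB₀)
      obtain ⟨B', hB', hsub1, hsub2⟩ := hins.exists_isBase_subset_union_isBase hBbase
      have heB' : e ∈ B' := hsub1 (mem_insert _ _)
      have hB'sub : B' ⊆ insert e B := by
        refine hsub2.trans ?_
        rw [insert_union]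
        exact insert_subset_insert (union_subset inter_subset_left Subset.rfl)
      have hcard : B'.encard = B.encard := hB'.encard_eq_encard_of_isBase hBbase
      have hBne : B.encard ≠ ⊤ := hBfin.encard_lt_top.ne
      have hdiff : ((insert e B) \ B').encard = 1 := by
        have h1 : ((insert e B) \ B').encard + B'.encard = (insert e B).encard :=
          encard_diff_add_encard_of_subset hB'sub
        rw [encard_insert_of_notMem heB, hcard] at h1
        exact WithTop.add_right_cancel (α := ℕ) hBne (h1.trans (add_comm _ _))
      obtain ⟨a, ha⟩ := encard_eq_one.mp hdiff
      have hmem : a ∈ (insert e B) \ B' := by rw [ha]; exact mem_singleton a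
      have haB' : a ∉ B' := hmem.2
      have haB : a ∈ B := by
        rcases hmem.1 with h | h
        · exact absurd (h ▸ heB') haB'
        · exact h
      have hane : a ≠ e := fun h => haB' (h ▸ heB')
      have haA : a ∈ A := by
        by_contra haA
        exact haB' (hsub1 (mem_insert_of_mem _ ⟨haB, ⟨hBE haB, haA⟩⟩))
      have hB'eq : B' = insert e (B \ {a}) := by
        rw [insert_diff_singleton_comm hane.symm]
        apply Subset.antisymm
        · intro x hx
          refine ⟨hB'sub hx, ?_⟩
          simp only [mem_singleton_iff]
          rintro rfl; exact haB' hx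
        · intro x hx
          by_contra hxB'
          have : x ∈ (insert e B) \ B' := ⟨hx.1, hxB'⟩
          rw [ha] at this
          exact hx.2 this
      -- weight comparison
      have heBa : e ∉ B \ {a} := fun h => heB h.1
      have haBa : a ∉ B \ {a} := fun h => h.2 rfl
      have hfinBa : (B \ {a}).Finite := hBfin.diff
      have hwB' : wSum w B' = w e + wSum w (B \ {a}) := by
        rw [hB'eq, wSum, finsum_mem_insert w heBa hfinBa]; rfl
      have hwB : wSum w B = w a + wSum w (B \ {a}) := by
        have : B = insert a (B \ {a}) := by
          rw [insert_diff_singleton, insert_eq_self.mpr haB]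
        conv_lhs => rw [this]
        rw [wSum, finsum_mem_insert w haBa hfinBa]; rfl
      have hlt : w e < w a := hw e heD a haA
      have := hB.2 B' hB'
      rw [hwB, hwB'] at this
      linarith
    rw [Subset.antisymm hIB₀ hsub]
    exact hB₀
  refine ⟨?_, hstep1⟩
  -- Step 2: B ∩ A is a base of the contraction
  have hBsplit : (B ∩ A) ∪ (B ∩ D) = B := by
    rw [← inter_union_distrib_left, union_diff_cancel hA,
      inter_eq_self_of_subset_left hBE]
  have hci : ConIndep M A (B ∩ A) :=
    ⟨inter_subset_right, B ∩ D, hstep1, by rw [hBsplit]; exact hBbase.indep⟩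
  constructor
  · exact hci
  · intro X hX hsubX
    obtain ⟨hXA, B₀', hB₀'base, hindep⟩ := hX
    have hB₀'D : B₀' ⊆ D := by
      have := hB₀'base.subset_ground
      rwa [restrict_ground_eq] at this
    have hXfin : X.Finite := hfin.subset (hXA.trans hA)
    -- card bound
    obtain ⟨B'', hB'', hsubB''⟩ := hindep.exists_isBase_superset
    have hle : (X ∪ B₀').encard ≤ B.encard := by
      calc (X ∪ B₀').encard ≤ B''.encard := encard_mono hsubB''
        _ = B.encard := hB''.encard_eq_encard_of_isBase hBbase
    have hdisj1 : Disjoint X B₀' :=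
      (disjoint_sdiff_right (s := A)).mono hXA hB₀'D
    have hdisj2 : Disjoint (B ∩ A) (B ∩ D) :=
      (disjoint_sdiff_right (s := A)).mono inter_subset_right inter_subset_right
    rw [encard_union_eq hdisj1] at hle
    have hBcard : B.encard = (B ∩ A).encard + (B ∩ D).encard := by
      rw [← encard_union_eq hdisj2, hBsplit]
    have hB₀'card : B₀'.encard = (B ∩ D).encard :=
      hB₀'base.encard_eq_encard_of_isBase hstep1
    rw [hBcard, hB₀'card] at hle
    have hne : (B ∩ D).encard ≠ ⊤ := (hBfin.inter_of_left _).encard_lt_top.ne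
    have hXle : X.encard ≤ (B ∩ A).encard :=
      (WithTop.add_le_add_iff_right hne).mp hle
    exact (hXfin.eq_of_subset_of_encard_le' hsubX hXle).symm.subset
end
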